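/- arXiv:2305.01231 — 5 statements merged into one kernel-verified Lean document; each statement's English description precedes it below -/
import Mathlib

section
/- Paley–Wiener growth estimate: Let a > 0 and f ∈ L₂((−a,a);ℂ), and define F(ρ) = ∫_{−a}^{a} f(x) e^{iρx} dx for ρ ∈ ℂ. Then F(ρ) = o(e^{a|Im ρ|}) as |ρ| → ∞, uniformly with respect to arg ρ; that is, for every ε > 0 there exists R > 0 such that |F(ρ)| ≤ ε e^{a|Im ρ|} for all ρ ∈ ℂ with |ρ| ≥ R. -/
open MeasureTheory Set Filter Topology

/-- `|exp(I ρ x)| ≤ exp (a |Im ρ|)` for `|x| ≤ a`. -/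
lemma pw_exp_bound (a : ℝ) (ρ : ℂ) {x : ℝ} (hx : |x| ≤ a) :
    ‖Complex.exp (Complex.I * ρ * (x : ℂ))‖ ≤ Real.exp (a * |ρ.im|) := by
  rw [Complex.norm_exp]
  apply Real.exp_le_exp.mpr
  have hre : (Complex.I * ρ * (x : ℂ)).re = -ρ.im * x := by
    simp [Complex.mul_re]
  rw [hre]
  calc -ρ.im * x ≤ |(-ρ.im) * x| := le_abs_self _
    _ = |ρ.im| * |x| := by rw [abs_mul, abs_neg]
    _ ≤ |ρ.im| * a := by
        exact mul_le_mul_of_nonneg_left hx (abs_nonneg _)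
    _ = a * |ρ.im| := mul_comm _ _

lemma pw_hasDerivAt_cexp (ρ : ℂ) (x : ℝ) :
    HasDerivAt (fun y : ℝ => Complex.exp (Complex.I * ρ * (y : ℂ)))
      (Complex.I * ρ * Complex.exp (Complex.I * ρ * (x : ℂ))) x := by
  have h1 : HasDerivAt (fun y : ℝ => Complex.I * ρ * (y : ℂ)) (Complex.I * ρ) x := by
    simpa using (Complex.ofRealCLM.hasDerivAt (x := x)).const_mul (Complex.I * ρ)
  simpa [mul_comm] using h1.cexp

set_option maxHeartbeats 2000000 in
/-- **Paley–Wiener growth estimate**: for `f ∈ L₂(-a, a)`, the entire function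
`F(ρ) = ∫_{-a}^{a} f(x) e^{iρx} dx` satisfies `F(ρ) = o(e^{a|Im ρ|})` as `|ρ| → ∞`,
uniformly with respect to `arg ρ`. -/
theorem paley_wiener_growth_estimate
    (a : ℝ) (ha : 0 < a) (f : ℝ → ℂ)
    (hf : MemLp f 2 (volume.restrict (Ioo (-a) a))) :
    ∀ ε : ℝ, 0 < ε → ∃ R : ℝ, 0 < R ∧
      ∀ ρ : ℂ, R ≤ ‖ρ‖ →
        ‖∫ x in (-a)..a, f x * Complex.exp (Complex.I * ρ * (x : ℂ))‖ ≤
          ε * Real.exp (a * |ρ.im|) := by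
  intro ε hε
  -- basic integrability of `f`
  haveI : IsFiniteMeasure (volume.restrict (Ioo (-a) a)) := by
    constructor
    rw [Measure.restrict_apply_univ, Real.volume_Ioo]
    exact ENNReal.ofReal_lt_top
  have hInt : IntegrableOn f (Ioo (-a) a) volume := hf.integrable one_le_two
  set f₀ : ℝ → ℂ := (Ioo (-a) a).indicator f with hf₀def
  have hf₀ : Integrable f₀ volume := hInt.integrable_indicator measurableSet_Ioo
  -- continuous compactly supported approximation
  obtain ⟨g, gsupp, hgapp, gcont, -⟩ :=
    (memLp_one_iff_integrable.mpr hf₀).exists_hasCompactSupport_eLpNorm_sub_le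
      (by norm_num) (ε := ENNReal.ofReal (ε / 4))
      (ENNReal.ofReal_pos.mpr (by positivity)).ne'
  have hgint : Integrable g volume := gcont.integrable_of_hasCompactSupport gsupp
  have hfg : ∫ x in Ioo (-a) a, ‖f x - g x‖ ≤ ε / 4 := by
    have hsub : Integrable (f₀ - g) volume := hf₀.sub hgint
    have h1 : ENNReal.ofReal (∫ x, ‖(f₀ - g) x‖) = eLpNorm (f₀ - g) 1 volume := by
      rw [eLpNorm_one_eq_lintegral_enorm, ofReal_integral_norm_eq_lintegral_enorm hsub]
    have h2 : ∫ x, ‖(f₀ - g) x‖ ≤ ε / 4 := by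
      have := h1.le.trans hgapp
      exact (ENNReal.ofReal_le_ofReal_iff (by positivity)).mp this
    calc ∫ x in Ioo (-a) a, ‖f x - g x‖ = ∫ x in Ioo (-a) a, ‖(f₀ - g) x‖ := by
          refine setIntegral_congr_fun measurableSet_Ioo fun x hx => ?_
          simp [hf₀def, indicator_of_mem hx]
      _ ≤ ∫ x, ‖(f₀ - g) x‖ := setIntegral_le_integral hsub.norm
            (Eventually.of_forall fun x => norm_nonneg _)
      _ ≤ ε / 4 := h2
  -- polynomial approximation of `g`
  obtain ⟨p, hp⟩ := exists_polynomial_near_of_continuousOn (-a) a (fun x => (g x).re)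
    (Complex.continuous_re.comp gcont).continuousOn (ε / (16 * a)) (by positivity)
  obtain ⟨q, hq⟩ := exists_polynomial_near_of_continuousOn (-a) a (fun x => (g x).im)
    (Complex.continuous_im.comp gcont).continuousOn (ε / (16 * a)) (by positivity)
  set h : ℝ → ℂ := fun x => ((p.eval x : ℝ) : ℂ) + ((q.eval x : ℝ) : ℂ) * Complex.I with hhdef
  set h' : ℝ → ℂ := fun x =>
    ((p.derivative.eval x : ℝ) : ℂ) + ((q.derivative.eval x : ℝ) : ℂ) * Complex.I with hh'def
  have hcont : Continuous h := by fun_prop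
  have hcont' : Continuous h' := by fun_prop
  have hder : ∀ x : ℝ, HasDerivAt h (h' x) x := fun x =>
    ((p.hasDerivAt x).ofReal_comp).add (((q.hasDerivAt x).ofReal_comp).mul_const Complex.I)
  -- L¹ distance from g to h
  have hgh_pt : ∀ x ∈ Icc (-a) a, ‖g x - h x‖ ≤ ε / (8 * a) := by
    intro x hx
    have h1 := (hp x hx).le
    have h2 := (hq x hx).le
    have hre : (g x - h x).re = (g x).re - p.eval x := by simp [hhdef]
    have him : (g x - h x).im = (g x).im - q.eval x := by simp [hhdef]
    calc ‖g x - h x‖ = ‖g x - h x‖ := rfl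
      _ ≤ |(g x - h x).re| + |(g x - h x).im| := Complex.norm_le_abs_re_add_abs_im _
      _ ≤ ε / (16 * a) + ε / (16 * a) := by
          rw [hre, him]
          have := abs_sub_comm (p.eval x) ((g x).re)
          gcongr <;> [skip; skip]
          · rw [abs_sub_comm]; exact h1
          · rw [abs_sub_comm]; exact h2
      _ = ε / (8 * a) := by ring
  have hgh : ∫ x in Ioo (-a) a, ‖g x - h x‖ ≤ ε / 4 := by
    have hint : IntegrableOn (fun x => ‖g x - h x‖) (Ioo (-a) a) volume :=
      ((gcont.sub hcont).norm.integrableOn_Icc).mono_set Ioo_subset_Icc_self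
    calc ∫ x in Ioo (-a) a, ‖g x - h x‖ ≤ ∫ _x in Ioo (-a) a, (ε / (8 * a)) := by
          refine setIntegral_mono_on hint (integrableOn_const ?_) measurableSet_Ioo
            fun x hx => hgh_pt x (Ioo_subset_Icc_self hx)
          rw [Real.volume_Ioo]; exact ENNReal.ofReal_ne_top
      _ = (ε / (8 * a)) * (2 * a) := by
          rw [setIntegral_const, smul_eq_mul, measureReal_def, Real.volume_Ioo, mul_comm]
          congr 1
          rw [ENNReal.toReal_ofReal (by linarith)]
          ring
      _ = ε / 4 := by field_simp; ring
  have hfh : ∫ x in Ioo (-a) a, ‖f x - h x‖ ≤ ε / 2 := by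
    have hint1 : IntegrableOn (fun x => ‖f x - g x‖) (Ioo (-a) a) volume :=
      (hInt.sub (hgint.integrableOn)).norm
    have hint2 : IntegrableOn (fun x => ‖g x - h x‖) (Ioo (-a) a) volume :=
      ((gcont.sub hcont).norm.integrableOn_Icc).mono_set Ioo_subset_Icc_self
    calc ∫ x in Ioo (-a) a, ‖f x - h x‖
        ≤ ∫ x in Ioo (-a) a, (‖f x - g x‖ + ‖g x - h x‖) := by
          refine setIntegral_mono_on ((hInt.sub
            ((hcont.integrableOn_Icc).mono_set Ioo_subset_Icc_self)).norm)
            (hint1.add hint2) measurableSet_Ioo fun x _ => ?_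
          calc ‖f x - h x‖ = ‖(f x - g x) + (g x - h x)‖ := by ring_nf
            _ ≤ ‖f x - g x‖ + ‖g x - h x‖ := norm_add_le _ _
      _ = (∫ x in Ioo (-a) a, ‖f x - g x‖) + ∫ x in Ioo (-a) a, ‖g x - h x‖ :=
          integral_add hint1 hint2
      _ ≤ ε / 4 + ε / 4 := add_le_add hfg hgh
      _ = ε / 2 := by ring
  -- bound for h' on Icc
  obtain ⟨M, hM⟩ := (isCompact_Icc (a := -a) (b := a)).exists_bound_of_continuousOn
    hcont'.continuousOn
  set M0 : ℝ := max M 0 with hM0def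
  have hM0 : ∀ x ∈ Icc (-a) a, ‖h' x‖ ≤ M0 := fun x hx => (hM x hx).trans (le_max_left _ _)
  have hM0nn : 0 ≤ M0 := le_max_right _ _
  set Bh : ℝ := ‖h a‖ + ‖h (-a)‖ + 2 * a * M0 with hBhdef
  have hBh0 : 0 ≤ Bh := by positivity
  refine ⟨max 1 (2 * (Bh + 1) / ε), lt_of_lt_of_le one_pos (le_max_left _ _), ?_⟩
  intro ρ hρ
  have hρ1 : 1 ≤ ‖ρ‖ := (le_max_left _ _).trans hρ
  have hρpos : 0 < ‖ρ‖ := lt_of_lt_of_le one_pos hρ1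
  have hρne : ρ ≠ 0 := by
    intro h0; rw [h0] at hρpos; simp at hρpos
  have hIρne : Complex.I * ρ ≠ 0 := mul_ne_zero Complex.I_ne_zero hρne
  set E : ℝ := Real.exp (a * |ρ.im|) with hEdef
  have hE0 : 0 < E := Real.exp_pos _
  set e : ℝ → ℂ := fun x => Complex.exp (Complex.I * ρ * (x : ℂ)) with hedef
  have he_cont : Continuous e := by fun_prop
  have he_bd : ∀ x ∈ Icc (-a) a, ‖e x‖ ≤ E := by
    intro x hx
    exact pw_exp_bound a ρ (abs_le.mpr ⟨hx.1, hx.2⟩)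
  -- integrability of the pieces
  have hfInt_Icc : IntegrableOn f (Icc (-a) a) volume := by
    rwa [integrableOn_Icc_iff_integrableOn_Ioo]
  have ieF : IntervalIntegrable (fun x => f x * e x) volume (-a) a := by
    rw [intervalIntegrable_iff_integrableOn_Ioc_of_le (by linarith)]
    exact ((hfInt_Icc.mul_continuousOn he_cont.continuousOn isCompact_Icc)).mono_set
      Ioc_subset_Icc_self
  have ieH : IntervalIntegrable (fun x => h x * e x) volume (-a) a :=
    (hcont.mul he_cont).intervalIntegrable _ _
  have ieFH : IntervalIntegrable (fun x => (f x - h x) * e x) volume (-a) a := by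
    have : (fun x => (f x - h x) * e x) = fun x => f x * e x - h x * e x := by
      funext x; ring
    rw [this]; exact ieF.sub ieH
  -- split
  have hsplit : (∫ x in (-a)..a, f x * e x)
      = (∫ x in (-a)..a, (f x - h x) * e x) + ∫ x in (-a)..a, h x * e x := by
    rw [← intervalIntegral.integral_add ieFH ieH]
    congr 1; funext x; ring
  -- bound for the first piece
  have hIoo_norm : ∫ x in (-a)..a, ‖f x - h x‖ ≤ ε / 2 := by
    rw [intervalIntegral.integral_of_le (by linarith), integral_Ioc_eq_integral_Ioo]
    exact hfh
  have ieN : IntervalIntegrable (fun x => ‖f x - h x‖) volume (-a) a := by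
    rw [intervalIntegrable_iff_integrableOn_Ioc_of_le (by linarith)]
    have h1 : IntegrableOn (fun x => f x - h x) (Icc (-a) a) volume :=
      hfInt_Icc.sub hcont.integrableOn_Icc
    exact (h1.mono_set Ioc_subset_Icc_self).norm
  have hbound1 : ‖∫ x in (-a)..a, (f x - h x) * e x‖ ≤ (ε / 2) * E := by
    have step1 : ‖∫ x in (-a)..a, (f x - h x) * e x‖
        ≤ ∫ x in (-a)..a, ‖(f x - h x) * e x‖ :=
      intervalIntegral.norm_integral_le_integral_norm (by linarith)
    have step2 : ∫ x in (-a)..a, ‖(f x - h x) * e x‖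
        ≤ ∫ x in (-a)..a, ‖f x - h x‖ * E := by
      refine intervalIntegral.integral_mono_on (by linarith) ieFH.norm (ieN.mul_const E)
        fun x hx => ?_
      rw [norm_mul]
      exact mul_le_mul_of_nonneg_left (he_bd x hx) (norm_nonneg _)
    have step3 : ∫ x in (-a)..a, ‖f x - h x‖ * E = (∫ x in (-a)..a, ‖f x - h x‖) * E :=
      intervalIntegral.integral_mul_const _ _
    calc ‖∫ x in (-a)..a, (f x - h x) * e x‖
        ≤ (∫ x in (-a)..a, ‖f x - h x‖) * E := by
          rw [← step3]; exact step1.trans step2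
      _ ≤ (ε / 2) * E := by
          exact mul_le_mul_of_nonneg_right hIoo_norm hE0.le
  -- integration by parts for the polynomial piece
  set v : ℝ → ℂ := fun x => Complex.exp (Complex.I * ρ * (x : ℂ)) / (Complex.I * ρ) with hvdef
  have hv : ∀ x : ℝ, HasDerivAt v (e x) x := by
    intro x
    have := (pw_hasDerivAt_cexp ρ x).div_const (Complex.I * ρ)
    simpa [hvdef, hedef, mul_div_assoc, mul_div_cancel_left₀ _ hIρne] using this
  have hv_bd : ∀ x ∈ Icc (-a) a, ‖v x‖ ≤ E / ‖ρ‖ := by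
    intro x hx
    rw [hvdef]
    simp only [norm_div, norm_mul, Complex.norm_I, one_mul]
    gcongr
    exact he_bd x hx
  have hparts : (∫ x in (-a)..a, h x * e x)
      = h a * v a - h (-a) * v (-a) - ∫ x in (-a)..a, h' x * v x := by
    exact intervalIntegral.integral_mul_deriv_eq_deriv_mul
      (fun x _ => hder x) (fun x _ => hv x)
      (hcont'.intervalIntegrable _ _)
      (he_cont.intervalIntegrable _ _)
  have hbound2 : ‖∫ x in (-a)..a, h x * e x‖ ≤ Bh * E / ‖ρ‖ := by
    rw [hparts]
    have hva : ‖v a‖ ≤ E / ‖ρ‖ := hv_bd a ⟨by linarith, le_refl a⟩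
    have hvma : ‖v (-a)‖ ≤ E / ‖ρ‖ := hv_bd (-a) ⟨le_refl _, by linarith⟩
    have hint_bd : ‖∫ x in (-a)..a, h' x * v x‖ ≤ M0 * (E / ‖ρ‖) * |a - (-a)| := by
      refine intervalIntegral.norm_integral_le_of_norm_le_const fun x hx => ?_
      have hx' : x ∈ Icc (-a) a := by
        rcases hx with ⟨h1, h2⟩
        rw [min_eq_left (by linarith : -a ≤ a)] at h1
        rw [max_eq_right (by linarith : -a ≤ a)] at h2
        exact ⟨h1.le, h2⟩
      rw [norm_mul]
      exact mul_le_mul (hM0 x hx') (hv_bd x hx') (norm_nonneg _) hM0nn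
    have habs2a : |a - (-a)| = 2 * a := by rw [abs_of_nonneg (by linarith)]; ring
    calc ‖h a * v a - h (-a) * v (-a) - ∫ x in (-a)..a, h' x * v x‖
        ≤ ‖h a * v a‖ + ‖h (-a) * v (-a)‖
            + ‖∫ x in (-a)..a, h' x * v x‖ := by
          exact (norm_sub_le _ _).trans (add_le_add_left (norm_sub_le _ _) _)
      _ ≤ ‖h a‖ * (E / ‖ρ‖) + ‖h (-a)‖ * (E / ‖ρ‖)
            + M0 * (E / ‖ρ‖) * (2 * a) := by
          rw [norm_mul, norm_mul]
          refine add_le_add (add_le_add ?_ ?_) ?_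
          · exact mul_le_mul_of_nonneg_left hva (norm_nonneg _)
          · exact mul_le_mul_of_nonneg_left hvma (norm_nonneg _)
          · rw [← habs2a]; exact hint_bd
      _ = Bh * E / ‖ρ‖ := by rw [hBhdef]; field_simp
  -- combine
  have hρ2 : 2 * (Bh + 1) / ε ≤ ‖ρ‖ := (le_max_right _ _).trans hρ
  have hfinal2 : Bh * E / ‖ρ‖ ≤ (ε / 2) * E := by
    rw [div_le_iff₀ hρpos]
    have h1 : Bh + 1 ≤ ε / 2 * ‖ρ‖ := by
      have := mul_le_mul_of_nonneg_left hρ2 (le_of_lt (by positivity : (0:ℝ) < ε / 2))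
      calc Bh + 1 = ε / 2 * (2 * (Bh + 1) / ε) := by field_simp
        _ ≤ ε / 2 * ‖ρ‖ := this
    calc Bh * E ≤ (Bh + 1) * E := by nlinarith
      _ ≤ (ε / 2 * ‖ρ‖) * E := mul_le_mul_of_nonneg_right h1 hE0.le
      _ = ε / 2 * E * ‖ρ‖ := by ring
  calc ‖∫ x in (-a)..a, f x * Complex.exp (Complex.I * ρ * (x : ℂ))‖
      = ‖(∫ x in (-a)..a, (f x - h x) * e x) + ∫ x in (-a)..a, h x * e x‖ := by
        rw [← hsplit]
    _ ≤ ‖∫ x in (-a)..a, (f x - h x) * e x‖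
        + ‖∫ x in (-a)..a, h x * e x‖ := norm_add_le _ _
    _ ≤ (ε / 2) * E + Bh * E / ‖ρ‖ := add_le_add hbound1 hbound2
    _ ≤ (ε / 2) * E + (ε / 2) * E := add_le_add_right hfinal2 _
    _ = ε * E := by ring
end

section
/- Boundedness of the matrix operator on the space of bounded sequences: Let V = {(n,i) : n ∈ ℕ, n ≥ 1, i ∈ {0,1}}, let ξ : ℕ → [0,∞) satisfy Σ_{k≥1} ξ_k² < ∞, and let A : V × V → ℂ be a matrix satisfying |A_{(n,i),(k,j)}| ≤ ξ_k/(|n − k| + 1) for all (n,i), (k,j) ∈ V. Then for every bounded sequence f ∈ ℓ^∞(V;ℂ) the series (Af)_{(n,i)} := Σ_{(k,j)∈V} A_{(n,i),(k,j)} f_{(k,j)} converges absolutely for every (n,i) ∈ V, the resulting map A : ℓ^∞(V;ℂ) → ℓ^∞(V;ℂ) is a bounded linear operator, and there is an absolute constant C > 0 (independent of ξ and A) such that ‖A‖ ≤ C (Σ_{k≥1} ξ_k²)^{1/2}. -/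
open Filter Topology

/-- The index set `V = {(n, i) : n ≥ 1, i ∈ {0, 1}}` (here `n : ℕ` stands for the
paper's index `n + 1`). -/
abbrev SeqIdx := ℕ × Fin 2


private lemma amgm_aux {t x y : ℝ} (ht : 0 < t) : x * y ≤ t / 2 * x ^ 2 + 1 / (2 * t) * y ^ 2 := by
  rw [← mul_le_mul_iff_right₀ (show (0:ℝ) < 2 * t by positivity)]
  rw [mul_add]
  have e1 : 2 * t * (t / 2 * x ^ 2) = t ^ 2 * x ^ 2 := by ring
  have e2 : 2 * t * (1 / (2 * t) * y ^ 2) = y ^ 2 := by field_simp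
  rw [e1, e2]
  nlinarith [sq_nonneg (t * x - y)]

private lemma basel_partial (N : ℕ) :
    ∑ m ∈ Finset.range N, (1:ℝ) / ((m:ℝ) + 1) ^ 2 ≤ 2 := by
  have : ∀ N : ℕ, ∑ m ∈ Finset.range N, (1:ℝ) / ((m:ℝ) + 1) ^ 2 ≤ 2 - 2 / ((N:ℝ) + 1) := by
    intro N
    induction N with
    | zero => norm_num
    | succ N ih =>
      rw [Finset.sum_range_succ]
      have h1 : (0:ℝ) < (N:ℝ) + 1 := by positivity
      have h2 : (0:ℝ) < (N:ℝ) + 2 := by positivity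
      have key : (1:ℝ) / ((N:ℝ) + 1) ^ 2 ≤ 2 / ((N:ℝ) + 1) - 2 / ((N:ℝ) + 2) := by
        rw [div_sub_div _ _ (ne_of_gt h1) (ne_of_gt h2),
          div_le_div_iff₀ (by positivity) (by positivity)]
        ring_nf
        nlinarith
      push_cast
      have key2 : 2 / ((N:ℝ) + 1 + 1) = 2 / ((N:ℝ) + 2) := by ring_nf
      rw [key2]
      linarith
  have h := this N
  have h2 : (0:ℝ) ≤ 2 / ((N:ℝ) + 1) := by positivity
  linarith

private lemma basel_summable : Summable (fun m : ℕ => (1:ℝ) / ((m:ℝ) + 1) ^ 2) :=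
  summable_of_sum_range_le (fun n => by positivity) basel_partial

private lemma basel_bound : (∑' m : ℕ, (1:ℝ) / ((m:ℝ) + 1) ^ 2) ≤ 2 :=
  Real.tsum_le_of_sum_range_le (fun n => by positivity) basel_partial

/-- Row sums of `1/(|n-k|+1)^2`. -/
private lemma dist_summable (n : ℕ) :
    Summable (fun k : ℕ => (1:ℝ) / (|(n:ℝ) - (k:ℝ)| + 1) ^ 2) := by
  rw [← summable_nat_add_iff n]
  apply basel_summable.congr
  intro m
  have : |(n:ℝ) - ((m + n : ℕ):ℝ)| = (m:ℝ) := by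
    push_cast
    rw [abs_sub_comm]
    rw [abs_of_nonneg (by linarith)]
    ring
  rw [this]

private lemma dist_bound (n : ℕ) :
    (∑' k : ℕ, (1:ℝ) / (|(n:ℝ) - (k:ℝ)| + 1) ^ 2) ≤ 4 := by
  rw [← Summable.sum_add_tsum_nat_add n (dist_summable n)]
  have h1 : ∑ i ∈ Finset.range n, (1:ℝ) / (|(n:ℝ) - (i:ℝ)| + 1) ^ 2 ≤ 2 := by
    have e : ∀ i ∈ Finset.range n, (1:ℝ) / (|(n:ℝ) - (i:ℝ)| + 1) ^ 2
        = (fun j : ℕ => (1:ℝ) / (((j:ℝ) + 1) + 1) ^ 2) (n - 1 - i) := by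
      intro i hi
      have hi' : i < n := Finset.mem_range.1 hi
      have h1 : |(n:ℝ) - (i:ℝ)| = ((n - i : ℕ) : ℝ) := by
        rw [Nat.cast_sub hi'.le, abs_of_nonneg (by
          have : (i:ℝ) ≤ (n:ℝ) := by exact_mod_cast hi'.le
          linarith)]
      have h2 : n - i = (n - 1 - i) + 1 := by omega
      simp only [h1, h2]
      push_cast
      ring_nf
    rw [Finset.sum_congr rfl e, Finset.sum_range_reflect (fun j : ℕ => (1:ℝ) / (((j:ℝ) + 1) + 1) ^ 2) n]
    calc ∑ j ∈ Finset.range n, (1:ℝ) / (((j:ℝ) + 1) + 1) ^ 2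
        ≤ ∑ j ∈ Finset.range n, (1:ℝ) / ((j:ℝ) + 1) ^ 2 := by
          apply Finset.sum_le_sum
          intro j _
          apply div_le_div_of_nonneg_left (by norm_num) (by positivity)
          have : ((j:ℝ) + 1) ^ 2 ≤ ((j:ℝ) + 1 + 1) ^ 2 := by nlinarith [Nat.cast_nonneg (α := ℝ) j]
          linarith
      _ ≤ 2 := basel_partial n
  have h2 : (∑' m : ℕ, (1:ℝ) / (|(n:ℝ) - ((m + n : ℕ):ℝ)| + 1) ^ 2) ≤ 2 := by
    have e : ∀ m : ℕ, (1:ℝ) / (|(n:ℝ) - ((m + n : ℕ):ℝ)| + 1) ^ 2 = (1:ℝ) / ((m:ℝ) + 1) ^ 2 := by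
      intro m
      have : |(n:ℝ) - ((m + n : ℕ):ℝ)| = (m:ℝ) := by
        push_cast
        rw [abs_sub_comm, abs_of_nonneg (by linarith)]
        ring
      rw [this]
    rw [tsum_congr e]
    exact basel_bound
  linarith


private lemma row_bound (ξ : ℕ → ℝ) (A : SeqIdx → SeqIdx → ℂ) (hξ : ∀ k, 0 ≤ ξ k)
    (hS : Summable fun k => ξ k ^ 2)
    (hA : ∀ v w : SeqIdx, ‖A v w‖ ≤ ξ w.1 / (|(v.1 : ℝ) - (w.1 : ℝ)| + 1)) (v : SeqIdx) :
    Summable (fun w : SeqIdx => ‖A v w‖) ∧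
      (∑' w : SeqIdx, ‖A v w‖) ≤ 5 * Real.sqrt (∑' k, ξ k ^ 2) := by
  set S := ∑' k, ξ k ^ 2 with hSdef
  have hS0 : 0 ≤ S := tsum_nonneg fun k => sq_nonneg _
  rcases eq_or_lt_of_le hS0 with h0 | hpos
  · -- degenerate case `S = 0`: the matrix vanishes
    have hxi : ∀ k, ξ k = 0 := by
      intro k
      have h1 : ξ k ^ 2 ≤ S := Summable.le_tsum hS k fun _ _ => sq_nonneg _
      nlinarith [hξ k, sq_nonneg (ξ k)]
    have hz : ∀ w : SeqIdx, ‖A v w‖ = 0 := by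
      intro w
      have h := hA v w
      rw [hxi w.1, zero_div] at h
      exact le_antisymm h (norm_nonneg _)
    refine ⟨summable_zero.congr fun w => (hz w).symm, ?_⟩
    rw [tsum_congr hz, tsum_zero]
    positivity
  · -- main case `S > 0`
    set t : ℝ := (Real.sqrt S)⁻¹ with htdef
    have hsq : 0 < Real.sqrt S := Real.sqrt_pos.2 hpos
    have ht : 0 < t := inv_pos.2 hsq
    set u : ℕ → ℝ := fun k => (1:ℝ) / (|(v.1 : ℝ) - (k:ℝ)| + 1) ^ 2 with hudef
    set g : ℕ → ℝ := fun k => t / 2 * ξ k ^ 2 + 1 / (2 * t) * u k with hgdef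
    have hg_sum : Summable g := (hS.mul_left _).add ((dist_summable v.1).mul_left _)
    have hg_nonneg : ∀ k, 0 ≤ g k := by
      intro k
      have h1 : (0:ℝ) ≤ u k := by positivity
      have h2 : (0:ℝ) ≤ ξ k ^ 2 := sq_nonneg _
      positivity
    have hmaj : ∀ w : SeqIdx, ‖A v w‖ ≤ g w.1 := by
      intro w
      refine (hA v w).trans ?_
      have h := amgm_aux (t := t) (x := ξ w.1) (y := 1 / (|(v.1 : ℝ) - (w.1 : ℝ)| + 1)) ht
      have e1 : ξ w.1 / (|(v.1 : ℝ) - (w.1 : ℝ)| + 1)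
          = ξ w.1 * (1 / (|(v.1 : ℝ) - (w.1 : ℝ)| + 1)) := by ring
      have e2 : (1 / (|(v.1 : ℝ) - (w.1 : ℝ)| + 1)) ^ 2 = u w.1 := by
        rw [hudef, div_pow, one_pow]
      rw [e1]
      rw [e2] at h
      exact h
    have hg_prod : Summable (fun w : SeqIdx => g w.1) := by
      refine (summable_prod_of_nonneg ?_).2 ⟨?_, ?_⟩
      · intro w; exact hg_nonneg w.1
      · intro k; exact Summable.of_finite
      · apply (hg_sum.mul_left 2).congr
        intro k
        simp [tsum_fintype, Fin.sum_univ_two, two_mul]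
    have hsum : Summable (fun w : SeqIdx => ‖A v w‖) :=
      Summable.of_nonneg_of_le (fun _ => norm_nonneg _) hmaj hg_prod
    refine ⟨hsum, ?_⟩
    set U : ℝ := ∑' k, u k with hUdef
    have hU4 : U ≤ 4 := dist_bound v.1
    have hU0 : 0 ≤ U := tsum_nonneg fun k => by positivity
    calc (∑' w : SeqIdx, ‖A v w‖)
        ≤ ∑' w : SeqIdx, g w.1 := Summable.tsum_le_tsum hmaj hsum hg_prod
      _ = ∑' k, ∑' j : Fin 2, g k := Summable.tsum_prod' hg_prod fun k => Summable.of_finite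
      _ = ∑' k, 2 * g k := by
          refine tsum_congr fun k => ?_
          simp [tsum_fintype, Fin.sum_univ_two, two_mul]
      _ = 2 * ∑' k, g k := tsum_mul_left
      _ = 2 * (t / 2 * S + 1 / (2 * t) * U) := by
          rw [hgdef]
          rw [Summable.tsum_add (hS.mul_left _) ((dist_summable v.1).mul_left _),
            tsum_mul_left, tsum_mul_left]
      _ = t * S + U * t⁻¹ := by field_simp
      _ = Real.sqrt S + U * Real.sqrt S := by
          rw [htdef, inv_inv]
          congr 1
          rw [inv_mul_eq_div, Real.div_sqrt]
      _ ≤ Real.sqrt S + 4 * Real.sqrt S := by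
          have := mul_le_mul_of_nonneg_right hU4 hsq.le
          linarith
      _ = 5 * Real.sqrt S := by ring

/-- **Boundedness of the matrix operator on `ℓ^∞(V; ℂ)`**: if `|A_{(n,i),(k,j)}| ≤
ξ_k / (|n - k| + 1)` with `Σ ξ_k² < ∞`, then `A` acts on bounded sequences by absolutely
convergent series, defines a bounded linear operator on `ℓ^∞(V; ℂ)`, and
`‖A‖ ≤ C (Σ ξ_k²)^{1/2}` for an absolute constant `C`. -/
theorem matrix_operator_bounded :
    ∃ C : ℝ, 0 < C ∧
      ∀ (ξ : ℕ → ℝ) (A : SeqIdx → SeqIdx → ℂ),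
        (∀ k, 0 ≤ ξ k) → Summable (fun k => ξ k ^ 2) →
        (∀ v w : SeqIdx, ‖A v w‖ ≤ ξ w.1 / (|(v.1 : ℝ) - (w.1 : ℝ)| + 1)) →
        (∀ f : SeqIdx → ℂ, (∃ B : ℝ, ∀ v, ‖f v‖ ≤ B) →
          ∀ v : SeqIdx, Summable (fun w : SeqIdx => ‖A v w * f w‖)) ∧
        ∃ T : lp (fun _ : SeqIdx => ℂ) ⊤ →L[ℂ] lp (fun _ : SeqIdx => ℂ) ⊤,
          (∀ (f : lp (fun _ : SeqIdx => ℂ) ⊤) (v : SeqIdx),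
            T f v = ∑' w : SeqIdx, A v w * f w) ∧
          ‖T‖ ≤ C * Real.sqrt (∑' k, ξ k ^ 2) := by
  refine ⟨5, by norm_num, fun ξ A hξ hS hA => ?_⟩
  set S := ∑' k, ξ k ^ 2 with hSdef
  set M : ℝ := 5 * Real.sqrt S with hMdef
  have hM0 : 0 ≤ M := by positivity
  have hrow := row_bound ξ A hξ hS hA
  -- absolute convergence against bounded sequences
  have habs : ∀ (f : SeqIdx → ℂ) (B : ℝ), (∀ v, ‖f v‖ ≤ B) →
      ∀ v : SeqIdx, Summable (fun w : SeqIdx => ‖A v w * f w‖) := by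
    intro f B hB v
    refine Summable.of_nonneg_of_le (fun _ => norm_nonneg _) (fun w => ?_) ((hrow v).1.mul_right B)
    rw [norm_mul]
    exact mul_le_mul_of_nonneg_left (hB w) (norm_nonneg _)
  refine ⟨fun f hf => hf.elim fun B hB => habs f B hB, ?_⟩
  -- construction of the operator
  have hfabs : ∀ (f : lp (fun _ : SeqIdx => ℂ) ⊤) (v : SeqIdx),
      Summable (fun w : SeqIdx => ‖A v w * f w‖) := by
    intro f v
    exact habs f ‖f‖ (fun w => lp.norm_apply_le_norm ENNReal.top_ne_zero f w) v
  have hfs : ∀ (f : lp (fun _ : SeqIdx => ℂ) ⊤) (v : SeqIdx),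
      Summable (fun w : SeqIdx => A v w * f w) := fun f v => (hfabs f v).of_norm
  have hgb : ∀ (f : lp (fun _ : SeqIdx => ℂ) ⊤) (v : SeqIdx),
      ‖∑' w : SeqIdx, A v w * f w‖ ≤ M * ‖f‖ := by
    intro f v
    calc ‖∑' w : SeqIdx, A v w * f w‖
        ≤ ∑' w : SeqIdx, ‖A v w * f w‖ := norm_tsum_le_tsum_norm (hfabs f v)
      _ ≤ ∑' w : SeqIdx, ‖A v w‖ * ‖f‖ := by
          refine Summable.tsum_le_tsum (fun w => ?_) (hfabs f v) ((hrow v).1.mul_right _)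
          rw [norm_mul]
          exact mul_le_mul_of_nonneg_left (lp.norm_apply_le_norm ENNReal.top_ne_zero f w)
            (norm_nonneg _)
      _ = (∑' w : SeqIdx, ‖A v w‖) * ‖f‖ := tsum_mul_right
      _ ≤ M * ‖f‖ := mul_le_mul_of_nonneg_right (hrow v).2 (norm_nonneg f)
  have hmem : ∀ f : lp (fun _ : SeqIdx => ℂ) ⊤,
      Memℓp (fun v : SeqIdx => ∑' w : SeqIdx, A v w * f w) ⊤ := by
    intro f
    apply memℓp_infty
    refine ⟨M * ‖f‖, ?_⟩
    rintro x ⟨v, rfl⟩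
    exact hgb f v
  let L : lp (fun _ : SeqIdx => ℂ) ⊤ →ₗ[ℂ] lp (fun _ : SeqIdx => ℂ) ⊤ :=
    { toFun := fun f => ⟨fun v => ∑' w : SeqIdx, A v w * f w, hmem f⟩
      map_add' := by
        intro f f'
        apply Subtype.ext
        funext v
        have : ∀ w : SeqIdx, A v w * (f + f') w = A v w * f w + A v w * f' w := by
          intro w
          rw [lp.coeFn_add]
          simp [mul_add]
        calc (∑' w : SeqIdx, A v w * (f + f') w)
            = ∑' w : SeqIdx, (A v w * f w + A v w * f' w) := tsum_congr this
          _ = (∑' w : SeqIdx, A v w * f w) + ∑' w : SeqIdx, A v w * f' w :=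
              Summable.tsum_add (hfs f v) (hfs f' v)
      map_smul' := by
        intro c f
        apply Subtype.ext
        funext v
        have : ∀ w : SeqIdx, A v w * (c • f) w = c * (A v w * f w) := by
          intro w
          rw [lp.coeFn_smul]
          simp [smul_eq_mul]
          ring
        calc (∑' w : SeqIdx, A v w * (c • f) w)
            = ∑' w : SeqIdx, c * (A v w * f w) := tsum_congr this
          _ = c * ∑' w : SeqIdx, A v w * f w := tsum_mul_left }
  have hLbound : ∀ f, ‖L f‖ ≤ M * ‖f‖ := by
    intro f
    exact lp.norm_le_of_forall_le (by positivity) (hgb f)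
  refine ⟨L.mkContinuous M hLbound, fun f v => rfl, ?_⟩
  exact L.mkContinuous_norm_le hM0 hLbound
end

section
/- Compactness of the matrix operator on the space of bounded sequences: Let V = {(n,i) : n ∈ ℕ, n ≥ 1, i ∈ {0,1}}, let ξ : ℕ → [0,∞) satisfy Σ_{k≥1} ξ_k² < ∞, and let A : V × V → ℂ satisfy |A_{(n,i),(k,j)}| ≤ ξ_k/(|n − k| + 1) for all (n,i), (k,j) ∈ V. Then the bounded linear operator on ℓ^∞(V;ℂ) defined by (Af)_{(n,i)} = Σ_{(k,j)∈V} A_{(n,i),(k,j)} f_{(k,j)} is a compact operator. -/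
open Filter Topology

namespace MOCAux

noncomputable section

abbrev Einf := lp (fun _ : SeqIdx => ℂ) ⊤

/-- evaluation at a coordinate as a CLM on ℓ^∞ -/
def evalCLM (w : SeqIdx) : Einf →L[ℂ] ℂ :=
  LinearMap.mkContinuous
    { toFun := fun f => f w
      map_add' := fun f g => by simp [lp.coeFn_add]
      map_smul' := fun c f => by simp [lp.coeFn_smul] }
    1 (fun f => by rw [one_mul]; exact lp.norm_apply_le_norm ENNReal.top_ne_zero f w)

theorem isCompactOperator_smulRight (w : SeqIdx) (g : Einf) :
    IsCompactOperator ((evalCLM w).smulRight g) := by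
  have h1 : IsCompactOperator (fun c : ℂ => c • g) := by
    refine ⟨(fun c : ℂ => c • g) '' Metric.closedBall 0 1, ?_, ?_⟩
    · exact (isCompact_closedBall 0 1).image (continuous_id.smul continuous_const)
    · exact Filter.mem_of_superset (Metric.closedBall_mem_nhds 0 one_pos)
        (Set.subset_preimage_image _ _)
  exact h1.comp_clm (evalCLM w)

theorem summable_row (B : SeqIdx → ℂ) (h : Summable (fun w => ‖B w‖)) (f : Einf) :
    Summable (fun w => B w * f w) := by
  refine Summable.of_norm (Summable.of_nonneg_of_le (fun w => norm_nonneg _) (fun w => ?_)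
    (h.mul_right ‖f‖))
  rw [norm_mul]
  exact mul_le_mul_of_nonneg_left (lp.norm_apply_le_norm ENNReal.top_ne_zero f w)
    (norm_nonneg _)

theorem exists_clm (B : SeqIdx → SeqIdx → ℂ) (C : ℝ) (hC : 0 ≤ C)
    (hsum : ∀ v, Summable (fun w => ‖B v w‖))
    (hbd : ∀ v, (∑' w, ‖B v w‖) ≤ C) :
    ∃ T : Einf →L[ℂ] Einf,
      (∀ f v, T f v = ∑' w, B v w * f w) ∧ ‖T‖ ≤ C := by
  have key : ∀ (f : Einf) v, Summable (fun w => B v w * f w) :=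
    fun f v => summable_row (B v) (hsum v) f
  have keyn : ∀ (f : Einf) v, Summable (fun w => ‖B v w * f w‖) :=
    fun f v => ((key f v).norm)
  have bnd : ∀ (f : Einf) v, ‖∑' w, B v w * f w‖ ≤ C * ‖f‖ := by
    intro f v
    calc ‖∑' w, B v w * f w‖ ≤ ∑' w, ‖B v w * f w‖ := norm_tsum_le_tsum_norm (keyn f v)
      _ ≤ ∑' w, ‖B v w‖ * ‖f‖ := by
          refine Summable.tsum_le_tsum (fun w => ?_) (keyn f v) ((hsum v).mul_right ‖f‖)
          rw [norm_mul]
          exact mul_le_mul_of_nonneg_left (lp.norm_apply_le_norm ENNReal.top_ne_zero f w)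
            (norm_nonneg _)
      _ = (∑' w, ‖B v w‖) * ‖f‖ := tsum_mul_right
      _ ≤ C * ‖f‖ := mul_le_mul_of_nonneg_right (hbd v) (norm_nonneg f)
  have mem : ∀ f : Einf, Memℓp (fun v => ∑' w, B v w * f w) ⊤ := by
    intro f
    refine memℓp_infty ⟨C * ‖f‖, ?_⟩
    rintro _ ⟨v, rfl⟩
    exact bnd f v
  let L : Einf →ₗ[ℂ] Einf :=
    { toFun := fun f => ⟨fun v => ∑' w, B v w * f w, mem f⟩
      map_add' := fun f g => by
        apply lp.ext
        funext v
        have : ∀ w : SeqIdx, B v w * (f + g) w = B v w * f w + B v w * g w := by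
          intro w; rw [lp.coeFn_add]; simp [mul_add]
        calc (∑' w, B v w * (f + g) w) = ∑' w, (B v w * f w + B v w * g w) :=
              tsum_congr this
          _ = (∑' w, B v w * f w) + ∑' w, B v w * g w := Summable.tsum_add (key f v) (key g v)
      map_smul' := fun c f => by
        apply lp.ext
        funext v
        have : ∀ w : SeqIdx, B v w * (c • f) w = c * (B v w * f w) := by
          intro w; rw [lp.coeFn_smul]; simp; ring
        calc (∑' w, B v w * (c • f) w) = ∑' w, c * (B v w * f w) := tsum_congr this
          _ = c * ∑' w, B v w * f w := tsum_mul_left }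
  refine ⟨L.mkContinuous C (fun f => ?_), fun f v => rfl, L.mkContinuous_norm_le hC _⟩
  exact lp.norm_le_of_forall_le (mul_nonneg hC (norm_nonneg f)) (bnd f)

end

end MOCAux

namespace MOCAux

noncomputable section

/-- `1/(m+1)^2` -/
def sfun (m : ℕ) : ℝ := (1 / ((m : ℝ) + 1)) ^ 2

theorem sfun_nonneg (m : ℕ) : 0 ≤ sfun m := sq_nonneg _

theorem sfun_summable : Summable sfun := by
  have h : Summable (fun n : ℕ => 1 / (n : ℝ) ^ 2) :=
    Real.summable_one_div_nat_pow.mpr one_lt_two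
  have h1 := (summable_nat_add_iff 1).mpr h
  refine h1.congr (fun m => ?_)
  unfold sfun
  rw [div_pow, one_pow]
  push_cast
  ring_nf

def Sval : ℝ := ∑' m, sfun m

theorem Sval_nonneg : 0 ≤ Sval := tsum_nonneg sfun_nonneg

/-- the inverse-distance-squared function in row `n` -/
def hsq (n k : ℕ) : ℝ := (1 / (|(n : ℝ) - (k : ℝ)| + 1)) ^ 2

theorem hsq_nonneg (n k : ℕ) : 0 ≤ hsq n k := sq_nonneg _

theorem abs_sub_eq_of_le {n k : ℕ} (h : n ≤ k) : |(n : ℝ) - (k : ℝ)| = ((k - n : ℕ) : ℝ) := by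
  rw [abs_sub_comm, Nat.cast_sub h, abs_of_nonneg]
  simp [Nat.cast_le.mpr h]

theorem abs_sub_eq_of_ge {n k : ℕ} (h : k ≤ n) : |(n : ℝ) - (k : ℝ)| = ((n - k : ℕ) : ℝ) := by
  rw [Nat.cast_sub h, abs_of_nonneg]
  simp [Nat.cast_le.mpr h]

theorem hsq_summable_tsum_le (n : ℕ) :
    Summable (hsq n) ∧ (∑' k, hsq n k) ≤ 2 * Sval := by
  set p : ℕ → ℝ := fun k => if n ≤ k then sfun (k - n) else 0 with hp
  set q : ℕ → ℝ := fun k => if k ≤ n then sfun (n - k) else 0 with hq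
  have hple : ∀ k, hsq n k ≤ p k + q k := by
    intro k
    rcases le_total n k with h | h
    · have : hsq n k = sfun (k - n) := by
        unfold hsq sfun; rw [abs_sub_eq_of_le h]
      rw [this, hp]
      simp only [if_pos h]
      have : 0 ≤ q k := by rw [hq]; dsimp only; split <;> simp [sfun_nonneg]
      linarith
    · have : hsq n k = sfun (n - k) := by
        unfold hsq sfun; rw [abs_sub_eq_of_ge h]
      rw [this, hq]
      simp only [if_pos h]
      have : 0 ≤ p k := by rw [hp]; dsimp only; split <;> simp [sfun_nonneg]
      linarith
  have hpsum : Summable p := by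
    refine (summable_nat_add_iff n).mp ?_
    refine sfun_summable.congr (fun k => ?_)
    rw [hp]; simp
  have hqsum : Summable q := by
    apply summable_of_ne_finset_zero (s := Finset.range (n + 1))
    intro k hk
    rw [Finset.mem_range, Nat.lt_succ_iff] at hk
    rw [hq]; simp only [if_neg hk]
  have hqt : (∑' k, q k) ≤ Sval := by
    rw [tsum_eq_sum (s := Finset.range (n + 1))
      (by intro k hk; rw [Finset.mem_range, Nat.lt_succ_iff] at hk; rw [hq]; simp [hk])]
    have : (∑ k ∈ Finset.range (n + 1), q k) = ∑ k ∈ Finset.range (n + 1), sfun (n - k) := by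
      refine Finset.sum_congr rfl (fun k hk => ?_)
      rw [Finset.mem_range, Nat.lt_succ_iff] at hk
      rw [hq]; simp [hk]
    rw [this]
    have hrefl := Finset.sum_range_reflect sfun (n + 1)
    have : (∑ k ∈ Finset.range (n + 1), sfun (n - k))
        = ∑ j ∈ Finset.range (n + 1), sfun j := by
      rw [← hrefl]
      rfl
    rw [this]
    exact Summable.sum_le_tsum _ (fun m _ => sfun_nonneg m) sfun_summable
  have hpt : (∑' k, p k) ≤ Sval := by
    rw [← Summable.sum_add_tsum_nat_add n hpsum]
    have h1 : (∑ i ∈ Finset.range n, p i) = 0 := by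
      refine Finset.sum_eq_zero (fun i hi => ?_)
      rw [Finset.mem_range] at hi
      rw [hp]; simp [Nat.not_le.mpr hi]
    have h2 : (∑' i : ℕ, p (i + n)) = Sval := by
      refine tsum_congr (fun i => ?_) |>.trans rfl
      rw [hp]; simp
    rw [h1, h2, zero_add]
  have hsum : Summable (hsq n) :=
    Summable.of_nonneg_of_le (hsq_nonneg n) hple (hpsum.add hqsum)
  refine ⟨hsum, ?_⟩
  calc (∑' k, hsq n k) ≤ ∑' k, (p k + q k) := Summable.tsum_le_tsum hple hsum (hpsum.add hqsum)
    _ = (∑' k, p k) + ∑' k, q k := Summable.tsum_add hpsum hqsum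
    _ ≤ Sval + Sval := add_le_add hpt hqt
    _ = 2 * Sval := by ring

end

end MOCAux

namespace MOCAux

noncomputable section

variable (ξ : ℕ → ℝ)

/-- tail sum of squares -/
def Rt (N : ℕ) : ℝ := ∑' k, (if N ≤ k then ξ k ^ 2 else 0)

variable {ξ}

theorem Rt_summand_summable (hξ : Summable (fun k => ξ k ^ 2)) (N : ℕ) :
    Summable (fun k => if N ≤ k then ξ k ^ 2 else 0) := by
  refine Summable.of_nonneg_of_le (fun k => ?_) (fun k => ?_) hξ
  · split <;> simp [sq_nonneg]
  · split <;> simp [sq_nonneg]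

theorem Rt_nonneg (N : ℕ) : 0 ≤ Rt ξ N :=
  tsum_nonneg (fun k => by split <;> simp [sq_nonneg])

theorem Rt_tendsto (hξ : Summable (fun k => ξ k ^ 2)) :
    Tendsto (Rt ξ) atTop (𝓝 0) := by
  have key : ∀ N, Rt ξ N = ∑' k, ξ (k + N) ^ 2 := by
    intro N
    unfold Rt
    rw [← Summable.sum_add_tsum_nat_add N (Rt_summand_summable hξ N)]
    have h1 : (∑ i ∈ Finset.range N, if N ≤ i then ξ i ^ 2 else 0) = 0 :=
      Finset.sum_eq_zero (fun i hi => by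
        rw [Finset.mem_range] at hi; simp [Nat.not_le.mpr hi])
    have h2 : (∑' i : ℕ, if N ≤ i + N then ξ (i + N) ^ 2 else 0) = ∑' i : ℕ, ξ (i + N) ^ 2 :=
      tsum_congr (fun i => by simp)
    rw [h1, h2, zero_add]
  have := tendsto_sum_nat_add (fun k => ξ k ^ 2)
  exact this.congr (fun N => (key N).symm)

/-- the quantitative tail bound for a single row -/
theorem tail_row (hξ0 : ∀ k, 0 ≤ ξ k) (hξ : Summable (fun k => ξ k ^ 2))
    (N n : ℕ) {ε : ℝ} (hε : 0 < ε) :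
    Summable (fun k => (if N ≤ k then ξ k else 0) * (1 / (|(n : ℝ) - (k : ℝ)| + 1))) ∧
    (∑' k, (if N ≤ k then ξ k else 0) * (1 / (|(n : ℝ) - (k : ℝ)| + 1)))
      ≤ (1 / (2 * ε)) * Rt ξ N + ε * Sval := by
  set a : ℕ → ℝ := fun k => if N ≤ k then ξ k else 0 with ha
  set b : ℕ → ℝ := fun k => 1 / (|(n : ℝ) - (k : ℝ)| + 1) with hb
  have ha0 : ∀ k, 0 ≤ a k := fun k => by rw [ha]; dsimp only; split <;> simp [hξ0]
  have hb0 : ∀ k, 0 ≤ b k := fun k => by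
    rw [hb]; positivity
  have hbsq : ∀ k, b k ^ 2 = hsq n k := fun k => rfl
  have hasq : ∀ k, a k ^ 2 = (if N ≤ k then ξ k ^ 2 else 0) := fun k => by
    rw [ha]; dsimp only; split <;> simp
  have hamgm : ∀ k, a k * b k ≤ (1 / (2 * ε)) * a k ^ 2 + (ε / 2) * b k ^ 2 := by
    intro k
    have h2 : (0:ℝ) < 2 * ε := by linarith
    have h3 : a k * b k ≤ (a k ^ 2 + ε ^ 2 * b k ^ 2) / (2 * ε) := by
      rw [le_div_iff₀ h2]
      nlinarith [sq_nonneg (a k - ε * b k)]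
    refine h3.trans (le_of_eq ?_)
    field_simp
  have hsqsum : Summable (fun k => a k ^ 2) := by
    refine ((Rt_summand_summable hξ N).congr (fun k => (hasq k).symm))
  have hRHS : Summable (fun k => (1 / (2 * ε)) * a k ^ 2 + (ε / 2) * b k ^ 2) := by
    refine Summable.add (hsqsum.mul_left _) ?_
    refine Summable.mul_left _ ?_
    exact ((hsq_summable_tsum_le n).1.congr (fun k => (hbsq k).symm))
  have hsum : Summable (fun k => a k * b k) :=
    Summable.of_nonneg_of_le (fun k => mul_nonneg (ha0 k) (hb0 k)) hamgm hRHS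
  refine ⟨hsum, ?_⟩
  calc (∑' k, a k * b k) ≤ ∑' k, ((1 / (2 * ε)) * a k ^ 2 + (ε / 2) * b k ^ 2) :=
        Summable.tsum_le_tsum hamgm hsum hRHS
    _ = (1 / (2 * ε)) * (∑' k, a k ^ 2) + (ε / 2) * ∑' k, b k ^ 2 := by
        rw [Summable.tsum_add (hsqsum.mul_left _) (Summable.mul_left _
          (((hsq_summable_tsum_le n).1.congr (fun k => (hbsq k).symm)))),
          tsum_mul_left, tsum_mul_left]
    _ ≤ (1 / (2 * ε)) * Rt ξ N + (ε / 2) * (2 * Sval) := by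
        have e1 : (∑' k, a k ^ 2) = Rt ξ N := by
          unfold Rt; exact tsum_congr hasq
        have e2 : (∑' k, b k ^ 2) ≤ 2 * Sval := by
          have : (∑' k, b k ^ 2) = ∑' k, hsq n k := tsum_congr hbsq
          rw [this]; exact (hsq_summable_tsum_le n).2
        have h1 : 0 ≤ 1 / (2 * ε) := by positivity
        have h2 : 0 ≤ ε / 2 := by positivity
        rw [e1]
        exact add_le_add le_rfl (mul_le_mul_of_nonneg_left e2 h2)
    _ = (1 / (2 * ε)) * Rt ξ N + ε * Sval := by ring

variable (ξ)

/-- the vanishing bound sequence -/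
def bnd (N : ℕ) : ℝ :=
  Real.sqrt (Rt ξ N) / 2 + (Real.sqrt (Rt ξ N) + 1 / ((N : ℝ) + 1)) * Sval

variable {ξ}

theorem bnd_nonneg (N : ℕ) : 0 ≤ bnd ξ N := by
  unfold bnd
  have h1 : 0 ≤ Real.sqrt (Rt ξ N) := Real.sqrt_nonneg _
  have h2 : (0:ℝ) < 1 / ((N : ℝ) + 1) := by positivity
  have := Sval_nonneg
  positivity

theorem tail_row_bnd (hξ0 : ∀ k, 0 ≤ ξ k) (hξ : Summable (fun k => ξ k ^ 2)) (N n : ℕ) :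
    Summable (fun k => (if N ≤ k then ξ k else 0) * (1 / (|(n : ℝ) - (k : ℝ)| + 1))) ∧
    (∑' k, (if N ≤ k then ξ k else 0) * (1 / (|(n : ℝ) - (k : ℝ)| + 1))) ≤ bnd ξ N := by
  set ε : ℝ := Real.sqrt (Rt ξ N) + 1 / ((N : ℝ) + 1) with hε
  have hεpos : 0 < ε := by rw [hε]; positivity
  obtain ⟨h1, h2⟩ := tail_row hξ0 hξ N n hεpos
  refine ⟨h1, h2.trans ?_⟩
  unfold bnd
  rw [← hε]
  have key : (1 / (2 * ε)) * Rt ξ N ≤ Real.sqrt (Rt ξ N) / 2 := by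
    rw [show (1 / (2 * ε)) * Rt ξ N = Rt ξ N / (2 * ε) by ring,
      div_le_iff₀ (by positivity)]
    have hs : Real.sqrt (Rt ξ N) * Real.sqrt (Rt ξ N) = Rt ξ N :=
      Real.mul_self_sqrt (Rt_nonneg N)
    have h2 : (0:ℝ) < 1 / ((N : ℝ) + 1) := by positivity
    have h3 : 0 ≤ Real.sqrt (Rt ξ N) := Real.sqrt_nonneg _
    rw [hε]
    nlinarith
  linarith

theorem bnd_tendsto (hξ : Summable (fun k => ξ k ^ 2)) :
    Tendsto (bnd ξ) atTop (𝓝 0) := by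
  have hsqrt : Tendsto (fun N => Real.sqrt (Rt ξ N)) atTop (𝓝 0) := by
    have := (Real.continuous_sqrt.tendsto 0).comp (Rt_tendsto hξ)
    simpa [Function.comp_def] using this
  have hinv : Tendsto (fun N : ℕ => 1 / ((N : ℝ) + 1)) atTop (𝓝 0) :=
    tendsto_one_div_add_atTop_nhds_zero_nat
  have h2 := (hsqrt.div_const 2).add ((hsqrt.add hinv).mul_const Sval)
  rw [show (0:ℝ) / 2 + (0 + 0) * Sval = 0 by ring] at h2
  exact h2

end

end MOCAux

namespace MOCAux

noncomputable section

theorem row_prod {F : ℕ → ℝ} (hF0 : ∀ k, 0 ≤ F k) (hF : Summable F) {C : ℝ}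
    (hFt : (∑' k, F k) ≤ C) (G : SeqIdx → ℂ) (hG : ∀ w, ‖G w‖ ≤ F w.1) :
    Summable (fun w => ‖G w‖) ∧ (∑' w : SeqIdx, ‖G w‖) ≤ 2 * C := by
  have hP : Summable (fun w : SeqIdx => F w.1) := by
    have := hF.mul_of_nonneg (Summable.of_finite (f := fun _ : Fin 2 => (1:ℝ)))
      hF0 (fun _ => zero_le_one)
    exact this.congr (fun w => by simp)
  have hGsum : Summable (fun w : SeqIdx => ‖G w‖) :=
    Summable.of_nonneg_of_le (fun w => norm_nonneg _) hG hP
  refine ⟨hGsum, ?_⟩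
  have h1 : (∑' w : SeqIdx, ‖G w‖) ≤ ∑' w : SeqIdx, F w.1 := Summable.tsum_le_tsum hG hGsum hP
  have h2 : (∑' w : SeqIdx, F w.1) = 2 * ∑' k, F k := by
    rw [Summable.tsum_prod hP]
    have : ∀ k : ℕ, (∑' _ : Fin 2, F k) = 2 * F k := fun k => by
      rw [tsum_fintype]
      simp [Finset.sum_const, two_mul]
    rw [tsum_congr this, tsum_mul_left]
  have h3 : 2 * (∑' k, F k) ≤ 2 * C := by linarith
  linarith [h1, h2 ▸ h1]

end

end MOCAux


set_option maxHeartbeats 1000000 in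
set_option synthInstance.maxHeartbeats 1000000 in
open MOCAux in
/-- **Compactness of the matrix operator on `ℓ^∞(V; ℂ)`**: if `|A_{(n,i),(k,j)}| ≤
ξ_k / (|n - k| + 1)` with `Σ ξ_k² < ∞`, then the associated bounded linear operator
`(Af)_{(n,i)} = Σ_{(k,j)} A_{(n,i),(k,j)} f_{(k,j)}` on `ℓ^∞(V; ℂ)` is compact. -/
theorem matrix_operator_compact
    (ξ : ℕ → ℝ) (A : SeqIdx → SeqIdx → ℂ)
    (hξ0 : ∀ k, 0 ≤ ξ k) (hξ : Summable (fun k => ξ k ^ 2))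
    (hA : ∀ v w : SeqIdx, ‖A v w‖ ≤ ξ w.1 / (|(v.1 : ℝ) - (w.1 : ℝ)| + 1)) :
    ∃ T : lp (fun _ : SeqIdx => ℂ) ⊤ →L[ℂ] lp (fun _ : SeqIdx => ℂ) ⊤,
      (∀ (f : lp (fun _ : SeqIdx => ℂ) ⊤) (v : SeqIdx),
        T f v = ∑' w : SeqIdx, A v w * f w) ∧
      IsCompactOperator (⇑T) := by
  classical
  set DN : ℕ → SeqIdx → SeqIdx → ℂ := fun N v w => if N ≤ w.1 then A v w else 0 with hDNdef
  set BN : ℕ → SeqIdx → SeqIdx → ℂ := fun N v w => if w.1 < N then A v w else 0 with hBNdef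
  -- row bounds for the tail kernels
  have hDrow : ∀ N (v : SeqIdx), Summable (fun w => ‖DN N v w‖) ∧
      (∑' w, ‖DN N v w‖) ≤ 2 * bnd ξ N := by
    intro N v
    have hta := tail_row_bnd hξ0 hξ N v.1
    refine row_prod (F := fun k => (if N ≤ k then ξ k else 0) * (1 / (|(v.1:ℝ) - (k:ℝ)| + 1)))
      (fun k => mul_nonneg (by split <;> simp [hξ0]) (by positivity)) hta.1 hta.2 _ (fun w => ?_)
    by_cases h : N ≤ w.1
    · simp only [hDNdef, if_pos h]
      calc ‖A v w‖ ≤ ξ w.1 / (|(v.1:ℝ) - (w.1:ℝ)| + 1) := hA v w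
        _ = ξ w.1 * (1 / (|(v.1:ℝ) - (w.1:ℝ)| + 1)) := by rw [mul_one_div]
    · simp only [hDNdef, if_neg h]
      simp
  have hArow : ∀ v : SeqIdx, Summable (fun w => ‖A v w‖) ∧
      (∑' w, ‖A v w‖) ≤ 2 * bnd ξ 0 := by
    intro v
    have h0 : ∀ w : SeqIdx, DN 0 v w = A v w := fun w => by
      simp [hDNdef]
    obtain ⟨h1, h2⟩ := hDrow 0 v
    refine ⟨h1.congr (fun w => by rw [h0 w]), ?_⟩
    calc (∑' w, ‖A v w‖) = ∑' w, ‖DN 0 v w‖ := tsum_congr (fun w => by rw [h0 w])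
      _ ≤ 2 * bnd ξ 0 := h2
  have hBrow : ∀ N (v : SeqIdx), Summable (fun w => ‖BN N v w‖) ∧
      (∑' w, ‖BN N v w‖) ≤ 2 * bnd ξ 0 := by
    intro N v
    have hle : ∀ w : SeqIdx, ‖BN N v w‖ ≤ ‖A v w‖ := fun w => by
      simp only [hBNdef]; split <;> simp
    have h1 : Summable (fun w => ‖BN N v w‖) :=
      Summable.of_nonneg_of_le (fun w => norm_nonneg _) hle (hArow v).1
    exact ⟨h1, (Summable.tsum_le_tsum hle h1 (hArow v).1).trans (hArow v).2⟩
  -- the three operators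
  obtain ⟨T, hT, -⟩ := exists_clm A (2 * bnd ξ 0)
    (by have := bnd_nonneg (ξ := ξ) 0; linarith)
    (fun v => (hArow v).1) (fun v => (hArow v).2)
  have hTdex : ∀ N, ∃ Td : Einf →L[ℂ] Einf,
      (∀ f v, Td f v = ∑' w, DN N v w * f w) ∧ ‖Td‖ ≤ 2 * bnd ξ N := fun N =>
    exists_clm (DN N) (2 * bnd ξ N) (by have := bnd_nonneg (ξ := ξ) N; linarith)
      (fun v => (hDrow N v).1) (fun v => (hDrow N v).2)
  choose Td hTd hTdnorm using hTdex
  have hTbex : ∀ N, ∃ Tb : Einf →L[ℂ] Einf,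
      (∀ f v, Tb f v = ∑' w, BN N v w * f w) ∧ ‖Tb‖ ≤ 2 * bnd ξ 0 := fun N =>
    exists_clm (BN N) (2 * bnd ξ 0) (by have := bnd_nonneg (ξ := ξ) 0; linarith)
      (fun v => (hBrow N v).1) (fun v => (hBrow N v).2)
  choose Tb hTb _ using hTbex
  -- splitting
  have hsplit : ∀ N, T = Tb N + Td N := by
    intro N
    refine ContinuousLinearMap.ext (fun f => ?_)
    apply lp.ext
    funext v
    have hsB : Summable (fun w => BN N v w * f w) := summable_row _ (hBrow N v).1 f
    have hsD : Summable (fun w => DN N v w * f w) := summable_row _ (hDrow N v).1 f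
    have hptw : ∀ w : SeqIdx, BN N v w * f w + DN N v w * f w = A v w * f w := by
      intro w
      by_cases h : w.1 < N
      · simp [hBNdef, hDNdef, h, Nat.not_le.mpr h]
      · simp [hBNdef, hDNdef, h, Nat.not_lt.mp h]
    have hadd : ((Tb N + Td N) f : ∀ _ : SeqIdx, ℂ) v = Tb N f v + Td N f v := by
      rw [ContinuousLinearMap.add_apply, lp.coeFn_add]
      rfl
    rw [hT, hadd, hTb, hTd, ← Summable.tsum_add hsB hsD]
    exact (tsum_congr hptw).symm
  -- the lp elements given by the columns of A
  have hmemg : ∀ w : SeqIdx, Memℓp (fun v => A v w) (⊤ : ENNReal) := by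
    intro w
    refine memℓp_infty ⟨ξ w.1, ?_⟩
    rintro _ ⟨v, rfl⟩
    refine (hA v w).trans (div_le_self (hξ0 w.1) ?_)
    have := abs_nonneg ((v.1:ℝ) - (w.1:ℝ))
    linarith
  set g : SeqIdx → Einf := fun w => ⟨fun v => A v w, hmemg w⟩ with hgdef
  -- each truncated operator is a finite sum of rank-one operators
  have hTbeq : ∀ N, Tb N = ∑ w ∈ Finset.range N ×ˢ (Finset.univ : Finset (Fin 2)),
      (evalCLM w).smulRight (g w) := by
    intro N
    refine ContinuousLinearMap.ext (fun f => ?_)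
    apply lp.ext
    funext v
    have hvan : ∀ w : SeqIdx, w ∉ Finset.range N ×ˢ (Finset.univ : Finset (Fin 2)) →
        BN N v w * f w = 0 := by
      intro w hw
      have : ¬ w.1 < N := by
        simpa [Finset.mem_product] using hw
      simp [hBNdef, this]
    have hrhs : ((∑ w ∈ Finset.range N ×ˢ (Finset.univ : Finset (Fin 2)),
        (evalCLM w).smulRight (g w)) f : ∀ _ : SeqIdx, ℂ) v
        = ∑ w ∈ Finset.range N ×ˢ (Finset.univ : Finset (Fin 2)), BN N v w * f w := by
      rw [ContinuousLinearMap.sum_apply, lp.coeFn_sum, Finset.sum_apply]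
      refine Finset.sum_congr rfl (fun w hw => ?_)
      have hwlt : w.1 < N := by
        simp only [Finset.mem_product, Finset.mem_range] at hw
        exact hw.1
      rw [ContinuousLinearMap.smulRight_apply, lp.coeFn_smul]
      simp only [Pi.smul_apply, smul_eq_mul]
      simp only [hBNdef]
      rw [if_pos hwlt]
      exact mul_comm ((f : ∀ _ : SeqIdx, ℂ) w) (A v w)
    rw [hTb, hrhs, tsum_eq_sum hvan]
  have hcompact : ∀ N, IsCompactOperator (⇑(Tb N)) := by
    intro N
    rw [hTbeq N]
    have : (∑ w ∈ Finset.range N ×ˢ (Finset.univ : Finset (Fin 2)),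
        (evalCLM w).smulRight (g w)) ∈ compactOperator (RingHom.id ℂ) Einf Einf :=
      Submodule.sum_mem _ (fun w _ => isCompactOperator_smulRight w (g w))
    exact this
  -- convergence in operator norm
  have hnorm : ∀ N, ‖T - Tb N‖ ≤ 2 * bnd ξ N := by
    intro N
    have : T - Tb N = Td N := by rw [hsplit N, add_sub_cancel_left]
    rw [this]
    exact hTdnorm N
  have htends : Tendsto (fun N => Tb N) atTop (𝓝 T) := by
    rw [tendsto_iff_norm_sub_tendsto_zero]
    have hb : Tendsto (fun N => 2 * bnd ξ N) atTop (𝓝 0) := by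
      have := (bnd_tendsto hξ).const_mul 2
      simpa using this
    refine squeeze_zero (fun N => norm_nonneg _) (fun N => ?_) hb
    rw [norm_sub_rev]
    exact hnorm N
  exact ⟨T, hT, isCompactOperator_of_tendsto htends (Eventually.of_forall hcompact)⟩
end

section
/- Truncation estimate and invertibility (abstract form of the finite-data approximation lemma): Let V = {(n,i) : n ∈ ℕ, n ≥ 1, i ∈ {0,1}}, let ξ : ℕ → [0,∞) satisfy Σ_{k≥1} ξ_k² < ∞, and let A : V × V → ℂ satisfy |A_{(n,i),(k,j)}| ≤ ξ_k/(|n − k| + 1). For K ≥ 1 define the truncated matrix A^K by A^K_{(n,i),(k,j)} = A_{(n,i),(k,j)} if k ≤ K and A^K_{(n,i),(k,j)} = 0 if k > K. Then, with the associated operators on ℓ^∞(V;ℂ): (i) there is an absolute constant C > 0 such that ‖A − A^K‖ ≤ C (Σ_{k>K} ξ_k²)^{1/2} for all K, so ‖A − A^K‖ → 0 as K → ∞; (ii) if the operator I + A has a bounded inverse on ℓ^∞(V;ℂ), then there exists K₀ such that for every K ≥ K₀ the operator I + A^K has a bounded inverse on ℓ^∞(V;ℂ). -/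
open Filter Topology

noncomputable section TruncAux

namespace TruncAux

/-- the comparison sequence `u m = (1/(m+1))²`. -/
def u (m : ℕ) : ℝ := (1 / ((m : ℝ) + 1)) ^ 2

lemma u_nonneg (m : ℕ) : 0 ≤ u m := sq_nonneg _

lemma summable_u : Summable u := by
  have h0 : Summable (fun n : ℕ => 1 / (n : ℝ) ^ 2) :=
    Real.summable_one_div_nat_pow.mpr one_lt_two
  have h1 := (summable_nat_add_iff 1).mpr h0
  refine h1.congr fun m => ?_
  unfold u
  push_cast
  rw [div_pow]
  norm_num

lemma sum_range_u_le (n : ℕ) : ∑ m ∈ Finset.range n, u m ≤ 2 - 2 / ((n : ℝ) + 1) := by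
  induction n with
  | zero => simp
  | succ n ih =>
      rw [Finset.sum_range_succ]
      have hn : (0 : ℝ) < (n : ℝ) + 1 := by positivity
      have hn2 : (0 : ℝ) < (n : ℝ) + 2 := by positivity
      have key : u n ≤ 2 / ((n : ℝ) + 1) - 2 / ((n : ℝ) + 2) := by
        unfold u
        rw [div_pow, one_pow, div_sub_div _ _ (ne_of_gt hn) (ne_of_gt hn2)]
        rw [div_le_div_iff₀ (by positivity) (by positivity)]
        ring_nf
        nlinarith [sq_nonneg ((n : ℝ) + 1)]
      push_cast
      rw [show ((n:ℝ) + 1 + 1) = (n:ℝ) + 2 by ring]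
      linarith

lemma tsum_u_le : ∑' m, u m ≤ 2 := by
  refine Real.tsum_le_of_sum_range_le u_nonneg fun n => ?_
  have : (0:ℝ) ≤ 2 / ((n : ℝ) + 1) := by positivity
  linarith [sum_range_u_le n]

/-- `b n k = 1/(|n - k| + 1)` -/
def b (n k : ℕ) : ℝ := 1 / (|(n : ℝ) - (k : ℝ)| + 1)

lemma b_nonneg (n k : ℕ) : 0 ≤ b n k := by
  unfold b; positivity

lemma b_sq_of_le {n k : ℕ} (h : k ≤ n) : (b n k) ^ 2 = u (n - k) := by
  unfold b u
  congr 2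
  rw [abs_of_nonneg (by simp [sub_nonneg]; exact_mod_cast h)]
  push_cast [Nat.cast_sub h]
  ring

lemma b_sq_of_gt {n k : ℕ} (h : n < k) : (b n k) ^ 2 = u (k - n) := by
  unfold b u
  congr 2
  rw [abs_of_nonpos (by simp [sub_nonpos]; exact_mod_cast h.le), neg_sub]
  push_cast [Nat.cast_sub h.le]
  ring

lemma sum_b_sq_le (n : ℕ) (s : Finset ℕ) : ∑ k ∈ s, (b n k) ^ 2 ≤ 4 := by
  classical
  rw [← Finset.sum_filter_add_sum_filter_not s (· ≤ n)]
  have h₁ : ∑ k ∈ s.filter (· ≤ n), (b n k) ^ 2 ≤ 2 := by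
    have : ∑ k ∈ s.filter (· ≤ n), (b n k) ^ 2
        = ∑ m ∈ (s.filter (· ≤ n)).image (n - ·), u m := by
      rw [Finset.sum_image]
      · exact Finset.sum_congr rfl fun k hk => b_sq_of_le (Finset.mem_filter.mp hk).2
      · intro a ha b hb hab
        have ha' := (Finset.mem_filter.mp ha).2
        have hb' := (Finset.mem_filter.mp hb).2
        simp only at hab
        omega
    rw [this]
    exact le_trans (Summable.sum_le_tsum _ (fun m _ => u_nonneg m) summable_u) tsum_u_le
  have h₂ : ∑ k ∈ s.filter (¬ · ≤ n), (b n k) ^ 2 ≤ 2 := by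
    have : ∑ k ∈ s.filter (¬ · ≤ n), (b n k) ^ 2
        = ∑ m ∈ (s.filter (¬ · ≤ n)).image (· - n), u m := by
      rw [Finset.sum_image]
      · refine Finset.sum_congr rfl fun k hk => ?_
        have := (Finset.mem_filter.mp hk).2
        exact b_sq_of_gt (by omega)
      · intro a ha b hb hab
        have ha' := (Finset.mem_filter.mp ha).2
        have hb' := (Finset.mem_filter.mp hb).2
        simp only [not_le] at ha' hb' hab
        omega
    rw [this]
    exact le_trans (Summable.sum_le_tsum _ (fun m _ => u_nonneg m) summable_u) tsum_u_le
  linarith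

lemma summable_b_sq (n : ℕ) : Summable (fun k => (b n k) ^ 2) :=
  summable_of_sum_le (fun _ => sq_nonneg _) (sum_b_sq_le n)

lemma tsum_b_sq_le (n : ℕ) : ∑' k, (b n k) ^ 2 ≤ 4 :=
  Summable.tsum_le_of_sum_le (summable_b_sq n) (sum_b_sq_le n)

/-- Cauchy–Schwarz for `tsum`. -/
lemma tsum_mul_le_sqrt (a c : ℕ → ℝ)
    (ha2 : Summable fun k => a k ^ 2) (hc2 : Summable fun k => c k ^ 2) :
    ∑' k, a k * c k ≤ Real.sqrt (∑' k, a k ^ 2) * Real.sqrt (∑' k, c k ^ 2) := by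
  refine tsum_le_of_sum_le' (by positivity) fun s => ?_
  calc ∑ k ∈ s, a k * c k
      ≤ Real.sqrt (∑ k ∈ s, a k ^ 2) * Real.sqrt (∑ k ∈ s, c k ^ 2) :=
        Real.sum_mul_le_sqrt_mul_sqrt s a c
    _ ≤ Real.sqrt (∑' k, a k ^ 2) * Real.sqrt (∑' k, c k ^ 2) := by
        gcongr <;>
          [exact Summable.sum_le_tsum s (fun k _ => sq_nonneg _) ha2;
           exact Summable.sum_le_tsum s (fun k _ => sq_nonneg _) hc2]

lemma summable_mul_of_sq (a c : ℕ → ℝ) (ha : ∀ k, 0 ≤ a k) (hc : ∀ k, 0 ≤ c k)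
    (ha2 : Summable fun k => a k ^ 2) (hc2 : Summable fun k => c k ^ 2) :
    Summable fun k => a k * c k := by
  refine Summable.of_nonneg_of_le (fun k => mul_nonneg (ha k) (hc k))
    (fun k => ?_) ((ha2.add hc2).div_const 2)
  nlinarith [sq_nonneg (a k - c k)]

abbrev E := lp (fun _ : SeqIdx => ℂ) ⊤

/-- coordinatewise bound for a kernel application. -/
lemma coord_bound {B : SeqIdx → SeqIdx → ℂ} {v : SeqIdx} {M : ℝ}
    (hrow : Summable fun w => ‖B v w‖) (hM : ∑' w, ‖B v w‖ ≤ M) (f : E) :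
    ‖∑' w, B v w * f w‖ ≤ M * ‖f‖ := by
  have hsumn : Summable fun w => ‖B v w * f w‖ := by
    refine Summable.of_nonneg_of_le (fun w => norm_nonneg _) (fun w => ?_) (hrow.mul_right ‖f‖)
    rw [norm_mul]
    exact mul_le_mul_of_nonneg_left (lp.norm_apply_le_norm ENNReal.top_ne_zero f w) (norm_nonneg _)
  calc ‖∑' w, B v w * f w‖ ≤ ∑' w, ‖B v w * f w‖ := norm_tsum_le_tsum_norm hsumn
    _ ≤ ∑' w, ‖B v w‖ * ‖f‖ := by
        refine Summable.tsum_le_tsum (fun w => ?_) hsumn (hrow.mul_right ‖f‖)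
        rw [norm_mul]
        exact mul_le_mul_of_nonneg_left (lp.norm_apply_le_norm ENNReal.top_ne_zero f w)
          (norm_nonneg _)
    _ = (∑' w, ‖B v w‖) * ‖f‖ := tsum_mul_right
    _ ≤ M * ‖f‖ := mul_le_mul_of_nonneg_right hM (norm_nonneg f)

lemma summable_ker_mul {B : SeqIdx → SeqIdx → ℂ} {v : SeqIdx}
    (hrow : Summable fun w => ‖B v w‖) (f : E) :
    Summable fun w => B v w * f w := by
  refine Summable.of_norm ?_
  refine Summable.of_nonneg_of_le (fun w => norm_nonneg _) (fun w => ?_) (hrow.mul_right ‖f‖)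
  rw [norm_mul]
  exact mul_le_mul_of_nonneg_left (lp.norm_apply_le_norm ENNReal.top_ne_zero f w) (norm_nonneg _)

/-- Build a bounded operator on `ℓ^∞` from a kernel with uniformly bounded row sums. -/
lemma mkOp (B : SeqIdx → SeqIdx → ℂ) (M : ℝ)
    (hrow : ∀ v, Summable fun w => ‖B v w‖) (hM : ∀ v, ∑' w, ‖B v w‖ ≤ M) :
    ∃ T : E →L[ℂ] E, (∀ (f : E) (v : SeqIdx), T f v = ∑' w, B v w * f w) := by
  have hM0 : 0 ≤ M := le_trans (tsum_nonneg fun w => norm_nonneg _) (hM ((0 : ℕ), (0 : Fin 2)))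
  have coordb : ∀ (f : E) (v : SeqIdx), ‖∑' w, B v w * f w‖ ≤ M * ‖f‖ :=
    fun f v => coord_bound (hrow v) (hM v) f
  have hmem : ∀ f : E, Memℓp (fun v => ∑' w, B v w * f w) ⊤ := by
    intro f
    apply memℓp_infty
    refine ⟨M * ‖f‖, ?_⟩
    rintro x ⟨v, rfl⟩
    exact coordb f v
  let L : E →ₗ[ℂ] E :=
    { toFun := fun f => ⟨fun v => ∑' w, B v w * f w, hmem f⟩
      map_add' := by
        intro f g
        ext v
        change (∑' w, B v w * (f + g) w) = (fun v => ∑' w, B v w * f w) v +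
          (fun v => ∑' w, B v w * g w) v
        simp only
        rw [← Summable.tsum_add (summable_ker_mul (hrow v) f) (summable_ker_mul (hrow v) g)]
        refine tsum_congr fun w => ?_
        have : (f + g) w = f w + g w := by rw [lp.coeFn_add]; rfl
        rw [this]; ring
      map_smul' := by
        intro c f
        ext v
        change (∑' w, B v w * (c • f) w) = c • (∑' w, B v w * f w)
        rw [smul_eq_mul, ← tsum_mul_left]
        refine tsum_congr fun w => ?_
        have : (c • f) w = c * f w := by rw [lp.coeFn_smul]; rfl
        rw [this]; ring }
  exact ⟨L.mkContinuous M (fun f => lp.norm_le_of_forall_le (mul_nonneg hM0 (norm_nonneg f))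
    (coordb f)), fun f v => rfl⟩

section Kernel

variable (ξ : ℕ → ℝ) (A : SeqIdx → SeqIdx → ℂ)
  (hξ : ∀ k, 0 ≤ ξ k) (hξ2 : Summable (fun k => ξ k ^ 2))
  (hA : ∀ v w : SeqIdx, ‖A v w‖ ≤ ξ w.1 / (|(v.1 : ℝ) - (w.1 : ℝ)| + 1))

/-- the tail of the square series. -/
def tail (K : ℕ) : ℝ := ∑' j : ℕ, ξ (j + K) ^ 2

include hξ hξ2 hA in
/-- Central row estimate for the tail kernel. -/
lemma row_bound (K : ℕ) (v : SeqIdx) :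
    Summable (fun w : SeqIdx => ‖(if K ≤ w.1 then A v w else 0 : ℂ)‖) ∧
      ∑' w : SeqIdx, ‖(if K ≤ w.1 then A v w else 0 : ℂ)‖
        ≤ 4 * Real.sqrt (tail ξ K) := by
  set n := v.1 with hn
  set a : ℕ → ℝ := fun k => if K ≤ k then ξ k else 0 with ha
  set F : ℕ → ℝ := fun k => a k * b n k with hF
  have ha_nn : ∀ k, 0 ≤ a k := by
    intro k
    simp only [ha]
    split
    · exact hξ k
    · exact le_rfl
  have ha2 : Summable fun k => a k ^ 2 := by
    refine Summable.of_nonneg_of_le (fun k => sq_nonneg _) (fun k => ?_) hξ2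
    simp only [ha]
    split
    · exact le_rfl
    · simpa using sq_nonneg (ξ k)
  have hFnn : ∀ k, 0 ≤ F k := fun k => mul_nonneg (ha_nn k) (b_nonneg n k)
  have hFsum : Summable F := summable_mul_of_sq a (b n) ha_nn (b_nonneg n) ha2 (summable_b_sq n)
  -- tsum of a² equals the tail
  have ha2eq : ∑' k, a k ^ 2 = tail ξ K := by
    rw [← Summable.sum_add_tsum_nat_add K ha2]
    have h1 : ∑ i ∈ Finset.range K, a i ^ 2 = 0 := by
      apply Finset.sum_eq_zero
      intro i hi
      have : ¬ K ≤ i := by simpa using Finset.mem_range.mp hi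
      simp [ha, this]
    have h2 : ∀ j : ℕ, a (j + K) ^ 2 = ξ (j + K) ^ 2 := by
      intro j; simp [ha, Nat.le_add_left]
    rw [h1, zero_add]
    exact tsum_congr h2
  -- CS estimate for ∑ F
  have hFle : ∑' k, F k ≤ Real.sqrt (tail ξ K) * 2 := by
    calc ∑' k, F k ≤ Real.sqrt (∑' k, a k ^ 2) * Real.sqrt (∑' k, (b n k) ^ 2) :=
          tsum_mul_le_sqrt a (b n) ha2 (summable_b_sq n)
      _ ≤ Real.sqrt (tail ξ K) * 2 := by
          rw [ha2eq]
          refine mul_le_mul_of_nonneg_left ?_ (Real.sqrt_nonneg _)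
          rw [show (2:ℝ) = Real.sqrt 4 by
            rw [show (4:ℝ) = 2 ^ 2 by norm_num, Real.sqrt_sq (by norm_num)]]
          exact Real.sqrt_le_sqrt (tsum_b_sq_le n)
  -- the product version
  have hGsum : Summable (fun w : SeqIdx => F w.1) := by
    rw [summable_prod_of_nonneg (f := fun w : SeqIdx => F w.1) (fun w => hFnn w.1)]
    refine ⟨fun k => (hasSum_fintype _).summable, ?_⟩
    refine (hFsum.mul_left 2).congr fun k => ?_
    rw [tsum_fintype]
    simp [Finset.sum_const, two_mul]
  have hGval : ∑' w : SeqIdx, F w.1 = 2 * ∑' k, F k := by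
    rw [Summable.tsum_prod' hGsum (fun k => (hasSum_fintype _).summable), ← tsum_mul_left]
    refine tsum_congr fun k => ?_
    rw [tsum_fintype]
    simp [Finset.sum_const, two_mul]
  have hRF : ∀ w : SeqIdx, ‖(if K ≤ w.1 then A v w else 0 : ℂ)‖ ≤ F w.1 := by
    intro w
    by_cases h : K ≤ w.1
    · rw [if_pos h]
      calc ‖A v w‖ ≤ ξ w.1 / (|(v.1 : ℝ) - (w.1 : ℝ)| + 1) := hA v w
        _ = F w.1 := by
            simp only [hF, ha, if_pos h]
            unfold b
            rw [← hn]
            ring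
    · rw [if_neg h]
      simp only [hF, ha, if_neg h, norm_zero, zero_mul]
      exact le_rfl
  have hRsum : Summable (fun w : SeqIdx => ‖(if K ≤ w.1 then A v w else 0 : ℂ)‖) :=
    Summable.of_nonneg_of_le (fun w => norm_nonneg _) hRF hGsum
  refine ⟨hRsum, ?_⟩
  calc ∑' w : SeqIdx, ‖(if K ≤ w.1 then A v w else 0 : ℂ)‖
      ≤ ∑' w : SeqIdx, F w.1 := Summable.tsum_le_tsum hRF hRsum hGsum
    _ = 2 * ∑' k, F k := hGval
    _ ≤ 2 * (Real.sqrt (tail ξ K) * 2) := by linarith [hFle]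
    _ = 4 * Real.sqrt (tail ξ K) := by ring

end Kernel

end TruncAux

end TruncAux


set_option maxHeartbeats 1000000 in
/-- **Truncation estimate and invertibility** (abstract form of Lemma 5.3): with
`|A_{(n,i),(k,j)}| ≤ ξ_k / (|n - k| + 1)`, `Σ ξ_k² < ∞`, and `A^K` the truncation of `A`
keeping the columns with `k < K` (paper's `k ≤ K`), the associated operators on
`ℓ^∞(V; ℂ)` satisfy `‖A - A^K‖ ≤ C (Σ_{k ≥ K} ξ_k²)^{1/2}` for an absolute constant `C`
(hence `‖A - A^K‖ → 0`), and if `I + A` is boundedly invertible then so is `I + A^K` for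
all sufficiently large `K`. -/
theorem truncation_estimate_and_invertibility :
    ∃ C : ℝ, 0 < C ∧
      ∀ (ξ : ℕ → ℝ) (A : SeqIdx → SeqIdx → ℂ),
        (∀ k, 0 ≤ ξ k) → Summable (fun k => ξ k ^ 2) →
        (∀ v w : SeqIdx, ‖A v w‖ ≤ ξ w.1 / (|(v.1 : ℝ) - (w.1 : ℝ)| + 1)) →
        ∃ T : lp (fun _ : SeqIdx => ℂ) ⊤ →L[ℂ] lp (fun _ : SeqIdx => ℂ) ⊤,
        ∃ Tt : ℕ → (lp (fun _ : SeqIdx => ℂ) ⊤ →L[ℂ] lp (fun _ : SeqIdx => ℂ) ⊤),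
          (∀ (f : lp (fun _ : SeqIdx => ℂ) ⊤) (v : SeqIdx),
            T f v = ∑' w : SeqIdx, A v w * f w) ∧
          (∀ (K : ℕ) (f : lp (fun _ : SeqIdx => ℂ) ⊤) (v : SeqIdx),
            Tt K f v = ∑' w : SeqIdx, (if w.1 < K then A v w else 0) * f w) ∧
          (∀ K : ℕ, ‖T - Tt K‖ ≤ C * Real.sqrt (∑' j : ℕ, ξ (j + K) ^ 2)) ∧
          Tendsto (fun K : ℕ => ‖T - Tt K‖) atTop (𝓝 0) ∧
          (IsUnit (1 + T) → ∃ K₀ : ℕ, ∀ K : ℕ, K₀ ≤ K → IsUnit (1 + Tt K)) := by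
  refine ⟨4, by norm_num, ?_⟩
  intro ξ A hξ hξ2 hA
  have hrow0 : ∀ v, Summable fun w : SeqIdx => ‖A v w‖ := by
    intro v
    refine ((TruncAux.row_bound ξ A hξ hξ2 hA 0 v).1).congr fun w => ?_
    simp [Nat.zero_le]
  have hrowsum0 : ∀ v, ∑' w : SeqIdx, ‖A v w‖ ≤ 4 * Real.sqrt (TruncAux.tail ξ 0) := by
    intro v
    calc ∑' w : SeqIdx, ‖A v w‖
        = ∑' w : SeqIdx, ‖(if 0 ≤ w.1 then A v w else 0 : ℂ)‖ :=
          tsum_congr (by intro w; simp [Nat.zero_le])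
      _ ≤ 4 * Real.sqrt (TruncAux.tail ξ 0) := (TruncAux.row_bound ξ A hξ hξ2 hA 0 v).2
  obtain ⟨T, hT⟩ := TruncAux.mkOp A _ hrow0 hrowsum0
  have hCrow : ∀ (K : ℕ) v, Summable fun w : SeqIdx => ‖(if w.1 < K then A v w else 0 : ℂ)‖ := by
    intro K v
    refine Summable.of_nonneg_of_le (fun w => norm_nonneg _) (fun w => ?_) (hrow0 v)
    split <;> simp
  have hCsum : ∀ (K : ℕ) v, ∑' w : SeqIdx, ‖(if w.1 < K then A v w else 0 : ℂ)‖
      ≤ 4 * Real.sqrt (TruncAux.tail ξ 0) := by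
    intro K v
    refine le_trans (Summable.tsum_le_tsum (fun w => ?_) (hCrow K v) (hrow0 v)) (hrowsum0 v)
    split <;> simp
  have hex : ∀ K : ℕ, ∃ T' : TruncAux.E →L[ℂ] TruncAux.E,
      ∀ (f : TruncAux.E) (v : SeqIdx),
        T' f v = ∑' w : SeqIdx, (if w.1 < K then A v w else 0) * f w :=
    fun K => TruncAux.mkOp _ _ (hCrow K) (hCsum K)
  choose Tt hTt using hex
  have hnorm : ∀ K : ℕ, ‖T - Tt K‖ ≤ 4 * Real.sqrt (TruncAux.tail ξ K) := by
    intro K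
    have hb0 : (0:ℝ) ≤ 4 * Real.sqrt (TruncAux.tail ξ K) := by positivity
    refine ContinuousLinearMap.opNorm_le_bound _ hb0 fun f => ?_
    refine lp.norm_le_of_forall_le (mul_nonneg hb0 (norm_nonneg f)) fun v => ?_
    have hv : ((T - Tt K) f) v = T f v - Tt K f v := by
      rw [ContinuousLinearMap.sub_apply, lp.coeFn_sub]; rfl
    rw [hv, hT, hTt]
    have hR := TruncAux.row_bound ξ A hξ hξ2 hA K v
    have hsub : (∑' w : SeqIdx, A v w * f w)
        - (∑' w : SeqIdx, (if w.1 < K then A v w else 0) * f w)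
        = ∑' w : SeqIdx, (if K ≤ w.1 then A v w else 0) * f w := by
      rw [← Summable.tsum_sub (TruncAux.summable_ker_mul (B := A) (hrow0 v) f)
        (TruncAux.summable_ker_mul (B := fun v w => if w.1 < K then A v w else 0)
          (hCrow K v) f)]
      refine tsum_congr fun w => ?_
      by_cases h : w.1 < K
      · rw [if_pos h, if_neg (by omega)]; ring
      · rw [if_neg h, if_pos (by omega)]; ring
    rw [hsub]
    exact TruncAux.coord_bound (B := fun v w => if K ≤ w.1 then A v w else 0) hR.1 hR.2 f
  have htail : Tendsto (fun K => TruncAux.tail ξ K) atTop (𝓝 0) :=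
    tendsto_sum_nat_add (fun k => ξ k ^ 2)
  have hsq : Tendsto (fun K => 4 * Real.sqrt (TruncAux.tail ξ K)) atTop (𝓝 0) := by
    have h2 : Tendsto (fun K => Real.sqrt (TruncAux.tail ξ K)) atTop (𝓝 0) := by
      have := (Real.continuous_sqrt.tendsto 0).comp htail
      simpa [Function.comp_def] using this
    simpa using h2.const_mul 4
  have htend : Tendsto (fun K : ℕ => ‖T - Tt K‖) atTop (𝓝 0) :=
    squeeze_zero (fun K => norm_nonneg _) (fun K => hnorm K) hsq
  refine ⟨T, Tt, hT, hTt, fun K => hnorm K, htend, ?_⟩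
  intro hU
  have h1 : Tendsto (fun K => (1 : TruncAux.E →L[ℂ] TruncAux.E) + Tt K) atTop (𝓝 (1 + T)) := by
    rw [tendsto_iff_norm_sub_tendsto_zero]
    refine htend.congr fun K => ?_
    rw [add_sub_add_left_eq_sub, norm_sub_rev]
  have hmem : ∀ᶠ y in 𝓝 ((1 : TruncAux.E →L[ℂ] TruncAux.E) + T), IsUnit y :=
    Units.isOpen.eventually_mem hU
  have := h1.eventually hmem
  rw [eventually_atTop] at this
  obtain ⟨K₀, hK₀⟩ := this
  exact ⟨K₀, hK₀⟩
end

section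
/- Continuous dependence of the solution on the potential: Let σ_m (m ≥ 1) and σ belong to L₂((0,π);ℂ) with ‖σ_m − σ‖_{L₂(0,π)} → 0 as m → ∞. For each λ ∈ ℂ let (φ_m(·,λ), u_m(·,λ)) be the solution of the Sturm–Liouville equation with potential σ_m′ satisfying φ_m(0,λ) = 1, u_m(0,λ) = 0, and let (φ(·,λ), u(·,λ)) be the solution with potential σ′ satisfying φ(0,λ) = 1, u(0,λ) = 0. Then for every R > 0, sup { |φ_m(x,λ) − φ(x,λ)| + |u_m(x,λ) − u(x,λ)| : x ∈ [0,π], λ ∈ ℂ, |λ| ≤ R } → 0 as m → ∞. -/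
open MeasureTheory Set Filter Topology intervalIntegral

/-- The branch of the square root with argument in `[-π/2, π/2)`. -/
noncomputable def csqrt (z : ℂ) : ℂ :=
  if (z ^ (2⁻¹ : ℂ)).arg = Real.pi / 2 then -(z ^ (2⁻¹ : ℂ)) else z ^ (2⁻¹ : ℂ)

/-- `y` together with its quasi-derivative `u` solves the Sturm–Liouville equation
`ℓ y = λ y` on `[0, π]` with singular potential `q = σ'`. -/
def IsSLSol (σ : ℝ → ℂ) (lam : ℂ) (y u : ℝ → ℂ) : Prop :=
  ContinuousOn y (Icc 0 Real.pi) ∧ ContinuousOn u (Icc 0 Real.pi) ∧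
    ∀ x ∈ Icc (0 : ℝ) Real.pi,
      y x = y 0 + ∫ t in (0 : ℝ)..x, (u t + σ t * y t) ∧
      u x = u 0 - ∫ t in (0 : ℝ)..x, (σ t * u t + σ t ^ 2 * y t + lam * y t)

/-- The normalization class `𝒩` of pairs of coprime polynomials: either `r₁` is monic with
`deg r₂ ≤ deg r₁` (case I) or `r₂` is monic with `deg r₁ < deg r₂` (case II). -/
def ClassN (r₁ r₂ : Polynomial ℂ) : Prop :=
  IsCoprime r₁ r₂ ∧
    ((r₁.Monic ∧ r₂.natDegree ≤ r₁.natDegree) ∨ (r₂.Monic ∧ r₁.natDegree < r₂.natDegree))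

/-! ### Auxiliary lemmas -/

/-- A Grönwall-type inequality with an `L¹` coefficient, proved by a partition argument. -/
lemma my_gronwall {b a Γ : ℝ} (hb : 0 ≤ b) {f g : ℝ → ℝ}
    (hgf : IntervalIntegrable (fun t => g t * f t) volume 0 b)
    (hg : IntervalIntegrable g volume 0 b)
    (hg0 : ∀ t, 0 ≤ g t) (hf0 : ∀ t, 0 ≤ f t) (ha : 0 ≤ a)
    (hineq : ∀ x ∈ Icc (0:ℝ) b, f x ≤ a + ∫ t in (0:ℝ)..x, g t * f t)
    (hΓ : (∫ t in (0:ℝ)..b, g t) ≤ Γ) :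
    ∀ x ∈ Icc (0:ℝ) b, f x ≤ a * 2 ^ (⌈2*Γ⌉₊ + 1) := by
  set G : ℝ → ℝ := fun x => ∫ t in (0:ℝ)..x, g t with hG
  set B : ℝ → ℝ := fun x => a + ∫ t in (0:ℝ)..x, g t * f t with hB
  have huIcc : Set.uIcc (0:ℝ) b = Icc 0 b := uIcc_of_le hb
  have hsub : ∀ {c d : ℝ}, c ∈ Icc (0:ℝ) b → d ∈ Icc (0:ℝ) b →
      Set.uIcc c d ⊆ Set.uIcc (0:ℝ) b := by
    intro c d hc hd
    rw [huIcc]; exact uIcc_subset_Icc hc hd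
  have hgf' : ∀ {c d : ℝ}, c ∈ Icc (0:ℝ) b → d ∈ Icc (0:ℝ) b →
      IntervalIntegrable (fun t => g t * f t) volume c d :=
    fun hc hd => hgf.mono_set (hsub hc hd)
  have hg' : ∀ {c d : ℝ}, c ∈ Icc (0:ℝ) b → d ∈ Icc (0:ℝ) b →
      IntervalIntegrable g volume c d := fun hc hd => hg.mono_set (hsub hc hd)
  have hGadd : ∀ {c d : ℝ}, c ∈ Icc (0:ℝ) b → d ∈ Icc (0:ℝ) b → c ≤ d →
      G d - G c = ∫ t in c..d, g t := by
    intro c d hc hd _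
    have := integral_add_adjacent_intervals (hg' (left_mem_Icc.2 hb) hc) (hg' hc hd)
    simp only [hG]; linarith
  have hBadd : ∀ {c d : ℝ}, c ∈ Icc (0:ℝ) b → d ∈ Icc (0:ℝ) b → c ≤ d →
      B d - B c = ∫ t in c..d, g t * f t := by
    intro c d hc hd _
    have := integral_add_adjacent_intervals (hgf' (left_mem_Icc.2 hb) hc) (hgf' hc hd)
    simp only [hB]; linarith
  have hBmono : ∀ {c d : ℝ}, c ∈ Icc (0:ℝ) b → d ∈ Icc (0:ℝ) b → c ≤ d → B c ≤ B d := by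
    intro c d hc hd hcd
    have h1 : (0:ℝ) ≤ ∫ t in c..d, g t * f t :=
      integral_nonneg hcd (fun u _ => mul_nonneg (hg0 u) (hf0 u))
    have := hBadd hc hd hcd; linarith
  have hB0 : B 0 = a := by simp [hB]
  have hBnonneg : ∀ {c : ℝ}, c ∈ Icc (0:ℝ) b → 0 ≤ B c := by
    intro c hc
    have := hBmono (left_mem_Icc.2 hb) hc hc.1
    rw [hB0] at this; linarith
  have hfB : ∀ {c : ℝ}, c ∈ Icc (0:ℝ) b → ∀ {y : ℝ}, y ∈ Icc (0:ℝ) c → f y ≤ B c := by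
    intro c hc y hy
    have hy' : y ∈ Icc (0:ℝ) b := ⟨hy.1, hy.2.trans hc.2⟩
    exact (hineq y hy').trans (hBmono hy' hc hy.2)
  have hstep : ∀ {d c : ℝ}, d ∈ Icc (0:ℝ) b → c ∈ Icc (0:ℝ) b → d ≤ c →
      G c - G d ≤ 1/2 → B c ≤ 2 * B d := by
    intro d c hd hc hdc hGle
    have key : (∫ t in d..c, g t * f t) ≤ ∫ t in d..c, g t * B c := by
      refine integral_mono_on hdc (hgf' hd hc) ((hg' hd hc).mul_const _) ?_
      intro t ht
      exact mul_le_mul_of_nonneg_left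
        (hfB hc ⟨hd.1.trans ht.1, ht.2⟩) (hg0 t)
    have h2 : (∫ t in d..c, g t * B c) = (G c - G d) * B c := by
      rw [hGadd hd hc hdc, ← intervalIntegral.integral_mul_const]
    have h3 := hBadd hd hc hdc
    have h4 : (G c - G d) * B c ≤ (1/2) * B c :=
      mul_le_mul_of_nonneg_right hGle (hBnonneg hc)
    nlinarith [hBnonneg hc]
  have hGcont : ContinuousOn G (Icc 0 b) := by
    have := continuousOn_primitive_interval' hg (left_mem_uIcc (a := (0:ℝ)) (b := b))
    rwa [huIcc] at this
  have main : ∀ k : ℕ, ∀ c ∈ Icc (0:ℝ) b, G c ≤ k / 2 → B c ≤ a * 2 ^ (k + 1) := by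
    intro k
    induction k with
    | zero =>
      intro c hc hGc
      have := hstep (left_mem_Icc.2 hb) hc hc.1 (by simpa [hG] using by linarith : G c - G 0 ≤ 1/2)
      rw [hB0] at this
      rw [show a * 2 ^ (0 + 1) = 2 * a by ring]
      exact this
    | succ k ih =>
      intro c hc hGc
      by_cases hle : G c ≤ k / 2
      · have := ih c hc hle
        have h2 : a * 2 ^ (k + 1) ≤ a * 2 ^ (k + 2) := by
          apply mul_le_mul_of_nonneg_left _ ha
          apply pow_le_pow_right₀ (by norm_num) (by omega)
        linarith
      · push_neg at hle
        have hG0 : G 0 = 0 := by simp [hG]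
        have hmem : (k:ℝ)/2 ∈ Icc (G 0) (G c) := by
          rw [hG0]; exact ⟨by positivity, le_of_lt hle⟩
        obtain ⟨d, hd, hGd⟩ := intermediate_value_Icc hc.1
          (hGcont.mono (Icc_subset_Icc le_rfl hc.2)) hmem
        have hd' : d ∈ Icc (0:ℝ) b := ⟨hd.1, hd.2.trans hc.2⟩
        have h1 := ih d hd' (le_of_eq hGd)
        have h2 := hstep hd' hc hd.2 (by rw [hGd]; push_cast at hGc ⊢; linarith)
        calc B c ≤ 2 * B d := h2
          _ ≤ 2 * (a * 2 ^ (k+1)) := by linarith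
          _ = a * 2 ^ (k+2) := by ring
  intro x hx
  have hGmono : G x ≤ G b := by
    have h1 : (0:ℝ) ≤ ∫ t in x..b, g t := integral_nonneg hx.2 (fun u _ => hg0 u)
    have := hGadd hx (right_mem_Icc.2 hb) hx.2
    linarith
  have hΓ0 : 2 * Γ ≤ (⌈2*Γ⌉₊ : ℝ) := Nat.le_ceil _
  have hfinal := main ⌈2*Γ⌉₊ x hx (by simp only [hG] at hGmono ⊢; linarith [hΓ, hGmono])
  exact (hineq x hx).trans hfinal

lemma restrict_Ioo_pi : (volume : Measure ℝ).restrict (Ioo 0 Real.pi) =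
    volume.restrict (Ioc 0 Real.pi) :=
  Measure.restrict_congr_set Ioo_ae_eq_Ioc

instance : IsFiniteMeasure ((volume : Measure ℝ).restrict (Ioo 0 Real.pi)) := by
  constructor
  rw [Measure.restrict_apply_univ]
  simp [Real.volume_Ioo]

lemma integrable_to_interval {f : ℝ → ℂ}
    (hf : Integrable f ((volume : Measure ℝ).restrict (Ioo 0 Real.pi))) :
    IntervalIntegrable f volume 0 Real.pi := by
  rw [intervalIntegrable_iff_integrableOn_Ioc_of_le Real.pi_pos.le]
  rw [IntegrableOn, ← restrict_Ioo_pi]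
  exact hf

lemma integrable_to_interval' {f : ℝ → ℝ}
    (hf : Integrable f ((volume : Measure ℝ).restrict (Ioo 0 Real.pi))) :
    IntervalIntegrable f volume 0 Real.pi := by
  rw [intervalIntegrable_iff_integrableOn_Ioc_of_le Real.pi_pos.le]
  rw [IntegrableOn, ← restrict_Ioo_pi]
  exact hf

lemma memLp_normsq {σ : ℝ → ℂ}
    (hσ : MemLp σ 2 ((volume : Measure ℝ).restrict (Ioo 0 Real.pi))) :
    Integrable (fun t => ‖σ t‖^2) ((volume : Measure ℝ).restrict (Ioo 0 Real.pi)) := by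
  have := hσ.integrable_norm_rpow two_ne_zero ENNReal.ofNat_ne_top
  simp only [ENNReal.toReal_ofNat] at this
  have heq : ∀ t : ℝ, ‖σ t‖ ^ (2:ℝ) = ‖σ t‖ ^ 2 := fun t => by
    rw [show (2:ℝ) = ((2:ℕ):ℝ) by norm_num, Real.rpow_natCast]
  exact this.congr (Filter.Eventually.of_forall heq)

lemma sigma_facts {σ : ℝ → ℂ}
    (hσ : MemLp σ 2 ((volume : Measure ℝ).restrict (Ioo 0 Real.pi))) :
    IntervalIntegrable σ volume 0 Real.pi ∧
    IntervalIntegrable (fun t => ‖σ t‖) volume 0 Real.pi ∧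
    IntervalIntegrable (fun t => ‖σ t‖^2) volume 0 Real.pi ∧
    IntervalIntegrable (fun t => (σ t)^2) volume 0 Real.pi := by
  have h1 : Integrable σ ((volume : Measure ℝ).restrict (Ioo 0 Real.pi)) :=
    hσ.integrable one_le_two
  have h2 := memLp_normsq hσ
  have h3 : Integrable (fun t => (σ t)^2) ((volume : Measure ℝ).restrict (Ioo 0 Real.pi)) := by
    refine h2.mono' (hσ.aestronglyMeasurable.mul hσ.aestronglyMeasurable |>.congr ?_) ?_
    · exact Filter.Eventually.of_forall (fun t => (sq (σ t)).symm)
    · exact Filter.Eventually.of_forall (fun t => by simp [sq_abs, norm_pow])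
  exact ⟨integrable_to_interval h1, integrable_to_interval' h1.norm,
    integrable_to_interval' h2, integrable_to_interval h3⟩

lemma q_integrable {σ₁ σ₂ : ℝ → ℂ}
    (h₁ : MemLp σ₁ 2 ((volume : Measure ℝ).restrict (Ioo 0 Real.pi)))
    (h₂ : MemLp σ₂ 2 ((volume : Measure ℝ).restrict (Ioo 0 Real.pi))) :
    IntervalIntegrable (fun t => ‖σ₁ t - σ₂ t‖ * (2 + ‖σ₁ t‖ + ‖σ₂ t‖)) volume 0 Real.pi := by
  apply integrable_to_interval'
  have hsqd : Integrable (fun t => ‖σ₁ t - σ₂ t‖^2)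
      ((volume : Measure ℝ).restrict (Ioo 0 Real.pi)) := memLp_normsq (h₁.sub h₂)
  have hsq₁ := memLp_normsq h₁
  have hsq₂ := memLp_normsq h₂
  have hbd : Integrable (fun t => (1/2) * ‖σ₁ t - σ₂ t‖^2 + (4 + 2*‖σ₁ t‖^2 + 2*‖σ₂ t‖^2))
      ((volume : Measure ℝ).restrict (Ioo 0 Real.pi)) := by
    exact (hsqd.const_mul _).add (((integrable_const _).add (hsq₁.const_mul 2)).add
      (hsq₂.const_mul 2))
  refine hbd.mono' ?_ ?_
  · exact (((h₁.aestronglyMeasurable.sub h₂.aestronglyMeasurable).norm).mul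
      ((aestronglyMeasurable_const.add h₁.aestronglyMeasurable.norm).add
        h₂.aestronglyMeasurable.norm))
  · refine Filter.Eventually.of_forall (fun t => ?_)
    have hs : 0 ≤ ‖σ₁ t - σ₂ t‖ := norm_nonneg _
    have ha : 0 ≤ ‖σ₁ t‖ := norm_nonneg _
    have hb : 0 ≤ ‖σ₂ t‖ := norm_nonneg _
    rw [Real.norm_eq_abs, abs_of_nonneg (by positivity)]
    nlinarith [sq_nonneg (‖σ₁ t - σ₂ t‖ - (2 + ‖σ₁ t‖ + ‖σ₂ t‖)),
      sq_nonneg (‖σ₁ t‖ - ‖σ₂ t‖), sq_nonneg (‖σ₁ t‖ - 1), sq_nonneg (‖σ₂ t‖ - 1)]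

lemma q3_integrable {σ₁ σ₂ : ℝ → ℂ}
    (h₁ : MemLp σ₁ 2 ((volume : Measure ℝ).restrict (Ioo 0 Real.pi)))
    (h₂ : MemLp σ₂ 2 ((volume : Measure ℝ).restrict (Ioo 0 Real.pi))) :
    IntervalIntegrable (fun t => ‖σ₁ t - σ₂ t‖ * (3 + ‖σ₁ t‖ + ‖σ₂ t‖)) volume 0 Real.pi := by
  apply integrable_to_interval'
  have hsqd : Integrable (fun t => ‖σ₁ t - σ₂ t‖^2)
      ((volume : Measure ℝ).restrict (Ioo 0 Real.pi)) := memLp_normsq (h₁.sub h₂)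
  have hsq₁ := memLp_normsq h₁
  have hsq₂ := memLp_normsq h₂
  have hbd : Integrable (fun t => (1/2) * ‖σ₁ t - σ₂ t‖^2 + (14 + 2*‖σ₁ t‖^2 + 2*‖σ₂ t‖^2))
      ((volume : Measure ℝ).restrict (Ioo 0 Real.pi)) := by
    exact (hsqd.const_mul _).add (((integrable_const _).add (hsq₁.const_mul 2)).add
      (hsq₂.const_mul 2))
  refine hbd.mono' ?_ ?_
  · exact (((h₁.aestronglyMeasurable.sub h₂.aestronglyMeasurable).norm).mul
      ((aestronglyMeasurable_const.add h₁.aestronglyMeasurable.norm).add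
        h₂.aestronglyMeasurable.norm))
  · refine Filter.Eventually.of_forall (fun t => ?_)
    have hs : 0 ≤ ‖σ₁ t - σ₂ t‖ := norm_nonneg _
    have ha : 0 ≤ ‖σ₁ t‖ := norm_nonneg _
    have hb : 0 ≤ ‖σ₂ t‖ := norm_nonneg _
    rw [Real.norm_eq_abs, abs_of_nonneg (by positivity)]
    nlinarith [sq_nonneg (‖σ₁ t - σ₂ t‖ - (3 + ‖σ₁ t‖ + ‖σ₂ t‖)),
      sq_nonneg (‖σ₁ t‖ - ‖σ₂ t‖), sq_nonneg (2*‖σ₁ t‖ - 3), sq_nonneg (2*‖σ₂ t‖ - 3)]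

/-- Key estimate: the difference of two solutions (for potentials `σ₁`, `σ₂`) satisfies a
Grönwall-type integral inequality. -/
lemma key_estimate {σ₁ σ₂ : ℝ → ℂ} {lam : ℂ} {R : ℝ} {y₁ u₁ y₂ u₂ : ℝ → ℂ}
    (hR : ‖lam‖ ≤ R)
    (h₁ : IsSLSol σ₁ lam y₁ u₁) (h₂ : IsSLSol σ₂ lam y₂ u₂)
    (hI₁ : IntervalIntegrable σ₁ volume 0 Real.pi)
    (hI₁n : IntervalIntegrable (fun t => ‖σ₁ t‖) volume 0 Real.pi)
    (hI₁sq : IntervalIntegrable (fun t => ‖σ₁ t‖^2) volume 0 Real.pi)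
    (hI₁csq : IntervalIntegrable (fun t => (σ₁ t)^2) volume 0 Real.pi)
    (hI₂ : IntervalIntegrable σ₂ volume 0 Real.pi)
    (hI₂n : IntervalIntegrable (fun t => ‖σ₂ t‖) volume 0 Real.pi)
    (hI₂sq : IntervalIntegrable (fun t => ‖σ₂ t‖^2) volume 0 Real.pi)
    (hI₂csq : IntervalIntegrable (fun t => (σ₂ t)^2) volume 0 Real.pi)
    (hq : IntervalIntegrable (fun t => ‖σ₁ t - σ₂ t‖ * (2 + ‖σ₁ t‖ + ‖σ₂ t‖)) volume 0 Real.pi)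
    (hq3 : IntervalIntegrable (fun t => ‖σ₁ t - σ₂ t‖ * (3 + ‖σ₁ t‖ + ‖σ₂ t‖)) volume 0 Real.pi) :
    ∀ x ∈ Icc (0:ℝ) Real.pi,
      ‖y₁ x - y₂ x‖ + ‖u₁ x - u₂ x‖ ≤
        (‖y₁ 0 - y₂ 0‖ + ‖u₁ 0 - u₂ 0‖)
        + (∫ t in (0:ℝ)..Real.pi,
            ‖σ₁ t - σ₂ t‖ * (3 + ‖σ₁ t‖ + ‖σ₂ t‖) * (‖y₂ t‖ + ‖u₂ t‖))
        + ∫ t in (0:ℝ)..x,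
            (1 + R + ‖σ₁ t‖ + ‖σ₁ t‖^2) * (‖y₁ t - y₂ t‖ + ‖u₁ t - u₂ t‖) := by
  have hR0 : 0 ≤ R := (norm_nonneg lam).trans hR
  intro x hx
  have hx0 : (0:ℝ) ≤ x := hx.1
  have hxπ : x ≤ Real.pi := hx.2
  have huIccπ : Set.uIcc (0:ℝ) Real.pi = Icc 0 Real.pi := uIcc_of_le Real.pi_pos.le
  have huIccx : Set.uIcc (0:ℝ) x = Icc 0 x := uIcc_of_le hx0
  have hsubx : Set.uIcc (0:ℝ) x ⊆ Set.uIcc (0:ℝ) Real.pi := by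
    rw [huIccπ, huIccx]; exact Icc_subset_Icc le_rfl hxπ
  have hsubIcc : Set.uIcc (0:ℝ) x ⊆ Icc (0:ℝ) Real.pi := by rw [← huIccπ]; exact hsubx
  have cy₁ : ContinuousOn y₁ (Set.uIcc 0 x) := h₁.1.mono hsubIcc
  have cu₁ : ContinuousOn u₁ (Set.uIcc 0 x) := h₁.2.1.mono hsubIcc
  have cy₂ : ContinuousOn y₂ (Set.uIcc 0 x) := h₂.1.mono hsubIcc
  have cu₂ : ContinuousOn u₂ (Set.uIcc 0 x) := h₂.2.1.mono hsubIcc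
  have cdy : ContinuousOn (fun t => y₁ t - y₂ t) (Set.uIcc 0 x) := cy₁.sub cy₂
  have cdu : ContinuousOn (fun t => u₁ t - u₂ t) (Set.uIcc 0 x) := cu₁.sub cu₂
  have i₁ := hI₁.mono_set hsubx
  have i₁n := hI₁n.mono_set hsubx
  have i₁sq := hI₁sq.mono_set hsubx
  have i₁csq := hI₁csq.mono_set hsubx
  have i₂ := hI₂.mono_set hsubx
  have i₂csq := hI₂csq.mono_set hsubx
  have iq := hq.mono_set hsubx
  have iq3 := hq3.mono_set hsubx
  have idiff : IntervalIntegrable (fun t => σ₁ t - σ₂ t) volume 0 x := i₁.sub i₂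
  have idiffn : IntervalIntegrable (fun t => ‖σ₁ t - σ₂ t‖) volume 0 x := idiff.norm
  have hint1 : IntervalIntegrable (fun t => u₁ t + σ₁ t * y₁ t) volume 0 x :=
    (cu₁.intervalIntegrable).add (i₁.mul_continuousOn cy₁)
  have hint2 : IntervalIntegrable (fun t => u₂ t + σ₂ t * y₂ t) volume 0 x :=
    (cu₂.intervalIntegrable).add (i₂.mul_continuousOn cy₂)
  have hint3 : IntervalIntegrable (fun t => σ₁ t * u₁ t + σ₁ t ^ 2 * y₁ t + lam * y₁ t)
      volume 0 x :=
    ((i₁.mul_continuousOn cu₁).add (i₁csq.mul_continuousOn cy₁)).add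
      ((cy₁.intervalIntegrable).const_mul lam)
  have hint4 : IntervalIntegrable (fun t => σ₂ t * u₂ t + σ₂ t ^ 2 * y₂ t + lam * y₂ t)
      volume 0 x :=
    ((i₂.mul_continuousOn cu₂).add (i₂csq.mul_continuousOn cy₂)).add
      ((cy₂.intervalIntegrable).const_mul lam)
  -- integral equations for the differences
  have e1 : y₁ x - y₂ x = (y₁ 0 - y₂ 0) + ∫ t in (0:ℝ)..x,
      ((u₁ t - u₂ t) + σ₁ t * (y₁ t - y₂ t) + (σ₁ t - σ₂ t) * y₂ t) := by
    rw [((h₁.2.2 x hx).1 : y₁ x = _), ((h₂.2.2 x hx).1 : y₂ x = _), add_sub_add_comm,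
      ← integral_sub hint1 hint2]
    congr 1
    apply integral_congr
    intro t _
    ring
  have e2 : u₁ x - u₂ x = (u₁ 0 - u₂ 0) - ∫ t in (0:ℝ)..x,
      (σ₁ t * (u₁ t - u₂ t) + (σ₁ t ^ 2 + lam) * (y₁ t - y₂ t)
        + (σ₁ t - σ₂ t) * u₂ t + (σ₁ t ^ 2 - σ₂ t ^ 2) * y₂ t) := by
    rw [((h₁.2.2 x hx).2 : u₁ x = _), ((h₂.2.2 x hx).2 : u₂ x = _), sub_sub_sub_comm,
      ← integral_sub hint3 hint4]
    congr 1
    apply integral_congr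
    intro t _
    ring
  -- bounds for the integrands
  have iF1 : IntervalIntegrable (fun t =>
      (u₁ t - u₂ t) + σ₁ t * (y₁ t - y₂ t) + (σ₁ t - σ₂ t) * y₂ t) volume 0 x :=
    ((cdu.intervalIntegrable).add (i₁.mul_continuousOn cdy)).add (idiff.mul_continuousOn cy₂)
  have iF2 : IntervalIntegrable (fun t =>
      σ₁ t * (u₁ t - u₂ t) + (σ₁ t ^ 2 + lam) * (y₁ t - y₂ t)
        + (σ₁ t - σ₂ t) * u₂ t + (σ₁ t ^ 2 - σ₂ t ^ 2) * y₂ t) volume 0 x :=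
    (((i₁.mul_continuousOn cdu).add
      ((i₁csq.add intervalIntegrable_const).mul_continuousOn cdy)).add
      (idiff.mul_continuousOn cu₂)).add
      ((i₁csq.sub i₂csq).mul_continuousOn cy₂)
  have ib₁ : IntervalIntegrable (fun t => ‖u₁ t - u₂ t‖ + ‖σ₁ t‖ * ‖y₁ t - y₂ t‖
      + ‖σ₁ t - σ₂ t‖ * ‖y₂ t‖) volume 0 x :=
    ((cdu.norm.intervalIntegrable).add (i₁n.mul_continuousOn cdy.norm)).add
      (idiffn.mul_continuousOn cy₂.norm)
  have ib₂ : IntervalIntegrable (fun t => ‖σ₁ t‖ * ‖u₁ t - u₂ t‖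
      + (‖σ₁ t‖^2 + R) * ‖y₁ t - y₂ t‖ + ‖σ₁ t - σ₂ t‖ * ‖u₂ t‖
      + ‖σ₁ t - σ₂ t‖ * (2 + ‖σ₁ t‖ + ‖σ₂ t‖) * ‖y₂ t‖) volume 0 x :=
    (((i₁n.mul_continuousOn cdu.norm).add
      ((i₁sq.add intervalIntegrable_const).mul_continuousOn cdy.norm)).add
      (idiffn.mul_continuousOn cu₂.norm)).add
      (iq.mul_continuousOn cy₂.norm)
  have n1 : ‖y₁ x - y₂ x‖ ≤ ‖y₁ 0 - y₂ 0‖ + ∫ t in (0:ℝ)..x,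
      (‖u₁ t - u₂ t‖ + ‖σ₁ t‖ * ‖y₁ t - y₂ t‖ + ‖σ₁ t - σ₂ t‖ * ‖y₂ t‖) := by
    rw [e1]
    refine (norm_add_le _ _).trans (add_le_add (le_refl _) ?_)
    refine (intervalIntegral.norm_integral_le_integral_norm hx0).trans ?_
    refine integral_mono_on hx0 iF1.norm ib₁ (fun t _ => ?_)
    refine (norm_add₃_le).trans ?_
    rw [norm_mul, norm_mul]

  have n2 : ‖u₁ x - u₂ x‖ ≤ ‖u₁ 0 - u₂ 0‖ + ∫ t in (0:ℝ)..x,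
      (‖σ₁ t‖ * ‖u₁ t - u₂ t‖ + (‖σ₁ t‖^2 + R) * ‖y₁ t - y₂ t‖
        + ‖σ₁ t - σ₂ t‖ * ‖u₂ t‖ + ‖σ₁ t - σ₂ t‖ * (2 + ‖σ₁ t‖ + ‖σ₂ t‖) * ‖y₂ t‖) := by
    rw [e2]
    refine (norm_sub_le _ _).trans (add_le_add (le_refl _) ?_)
    refine (intervalIntegral.norm_integral_le_integral_norm hx0).trans ?_
    refine integral_mono_on hx0 iF2.norm ib₂ (fun t _ => ?_)
    have k0 : ‖σ₁ t * (u₁ t - u₂ t) + (σ₁ t ^ 2 + lam) * (y₁ t - y₂ t)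
        + (σ₁ t - σ₂ t) * u₂ t + (σ₁ t ^ 2 - σ₂ t ^ 2) * y₂ t‖
        ≤ ‖σ₁ t * (u₁ t - u₂ t)‖ + ‖(σ₁ t ^ 2 + lam) * (y₁ t - y₂ t)‖
          + ‖(σ₁ t - σ₂ t) * u₂ t‖ + ‖(σ₁ t ^ 2 - σ₂ t ^ 2) * y₂ t‖ := by
      refine (norm_add_le _ _).trans ?_
      have := norm_add₃_le (E := ℂ) (a := σ₁ t * (u₁ t - u₂ t))
        (b := (σ₁ t ^ 2 + lam) * (y₁ t - y₂ t)) (c := (σ₁ t - σ₂ t) * u₂ t)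
      linarith
    refine k0.trans ?_
    have k1 : ‖(σ₁ t ^ 2 + lam) * (y₁ t - y₂ t)‖ ≤ (‖σ₁ t‖^2 + R) * ‖y₁ t - y₂ t‖ := by
      rw [norm_mul]
      apply mul_le_mul_of_nonneg_right _ (norm_nonneg _)
      refine (norm_add_le _ _).trans ?_
      rw [norm_pow]
      have : ‖lam‖ ≤ R := hR
      linarith
    have k2 : ‖(σ₁ t ^ 2 - σ₂ t ^ 2) * y₂ t‖
        ≤ ‖σ₁ t - σ₂ t‖ * (2 + ‖σ₁ t‖ + ‖σ₂ t‖) * ‖y₂ t‖ := by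
      rw [norm_mul]
      apply mul_le_mul_of_nonneg_right _ (norm_nonneg _)
      have h1 : σ₁ t ^ 2 - σ₂ t ^ 2 = (σ₁ t - σ₂ t) * (σ₁ t + σ₂ t) := by ring
      rw [h1, norm_mul]
      apply mul_le_mul_of_nonneg_left _ (norm_nonneg _)
      refine (norm_add_le _ _).trans ?_
      linarith
    have k3 : ‖σ₁ t * (u₁ t - u₂ t)‖ = ‖σ₁ t‖ * ‖u₁ t - u₂ t‖ := norm_mul _ _
    have k4 : ‖(σ₁ t - σ₂ t) * u₂ t‖ = ‖σ₁ t - σ₂ t‖ * ‖u₂ t‖ := norm_mul _ _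
    linarith
  -- combine
  have hsum : (∫ t in (0:ℝ)..x,
      (‖u₁ t - u₂ t‖ + ‖σ₁ t‖ * ‖y₁ t - y₂ t‖ + ‖σ₁ t - σ₂ t‖ * ‖y₂ t‖))
      + (∫ t in (0:ℝ)..x,
      (‖σ₁ t‖ * ‖u₁ t - u₂ t‖ + (‖σ₁ t‖^2 + R) * ‖y₁ t - y₂ t‖
        + ‖σ₁ t - σ₂ t‖ * ‖u₂ t‖ + ‖σ₁ t - σ₂ t‖ * (2 + ‖σ₁ t‖ + ‖σ₂ t‖) * ‖y₂ t‖))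
      ≤ (∫ t in (0:ℝ)..x,
          ‖σ₁ t - σ₂ t‖ * (3 + ‖σ₁ t‖ + ‖σ₂ t‖) * (‖y₂ t‖ + ‖u₂ t‖))
        + ∫ t in (0:ℝ)..x,
          (1 + R + ‖σ₁ t‖ + ‖σ₁ t‖^2) * (‖y₁ t - y₂ t‖ + ‖u₁ t - u₂ t‖) := by
    have icx : IntervalIntegrable (fun t =>
        ‖σ₁ t - σ₂ t‖ * (3 + ‖σ₁ t‖ + ‖σ₂ t‖) * (‖y₂ t‖ + ‖u₂ t‖)) volume 0 x :=
      iq3.mul_continuousOn (cy₂.norm.add cu₂.norm)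
    have igf : IntervalIntegrable (fun t =>
        (1 + R + ‖σ₁ t‖ + ‖σ₁ t‖^2) * (‖y₁ t - y₂ t‖ + ‖u₁ t - u₂ t‖)) volume 0 x :=
      ((intervalIntegrable_const.add i₁n).add i₁sq).mul_continuousOn (cdy.norm.add cdu.norm)
    rw [← integral_add ib₁ ib₂, ← integral_add icx igf]
    refine integral_mono_on hx0 (ib₁.add ib₂) (icx.add igf) (fun t _ => ?_)
    have hs : 0 ≤ ‖σ₁ t - σ₂ t‖ := norm_nonneg _
    have ha : 0 ≤ ‖σ₁ t‖ := norm_nonneg _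
    have hb : 0 ≤ ‖σ₂ t‖ := norm_nonneg _
    have hdy : 0 ≤ ‖y₁ t - y₂ t‖ := norm_nonneg _
    have hdu : 0 ≤ ‖u₁ t - u₂ t‖ := norm_nonneg _
    have hY : 0 ≤ ‖y₂ t‖ := norm_nonneg _
    have hU : 0 ≤ ‖u₂ t‖ := norm_nonneg _
    nlinarith [mul_nonneg hR0 hdu, mul_nonneg (mul_nonneg ha ha) hdu,
      mul_nonneg (mul_nonneg hs (by linarith : (0:ℝ) ≤ 2 + ‖σ₁ t‖ + ‖σ₂ t‖)) hU]
  have hcrossmono : (∫ t in (0:ℝ)..x,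
      ‖σ₁ t - σ₂ t‖ * (3 + ‖σ₁ t‖ + ‖σ₂ t‖) * (‖y₂ t‖ + ‖u₂ t‖))
      ≤ ∫ t in (0:ℝ)..Real.pi,
        ‖σ₁ t - σ₂ t‖ * (3 + ‖σ₁ t‖ + ‖σ₂ t‖) * (‖y₂ t‖ + ‖u₂ t‖) := by
    have hsubx' : Set.uIcc x Real.pi ⊆ Set.uIcc (0:ℝ) Real.pi := by
      rw [huIccπ, uIcc_of_le hxπ]
      exact Icc_subset_Icc hx0 le_rfl
    have cy₂' : ContinuousOn y₂ (Set.uIcc 0 Real.pi) := by rw [huIccπ]; exact h₂.1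
    have cu₂' : ContinuousOn u₂ (Set.uIcc 0 Real.pi) := by rw [huIccπ]; exact h₂.2.1
    have icq : IntervalIntegrable (fun t =>
        ‖σ₁ t - σ₂ t‖ * (3 + ‖σ₁ t‖ + ‖σ₂ t‖) * (‖y₂ t‖ + ‖u₂ t‖)) volume 0 Real.pi :=
      hq3.mul_continuousOn (cy₂'.norm.add cu₂'.norm)
    have hnn : (0:ℝ) ≤ ∫ t in x..Real.pi,
        ‖σ₁ t - σ₂ t‖ * (3 + ‖σ₁ t‖ + ‖σ₂ t‖) * (‖y₂ t‖ + ‖u₂ t‖) := by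
      refine integral_nonneg hxπ (fun s _ => ?_)
      positivity
    have := integral_add_adjacent_intervals
      (icq.mono_set hsubx) (icq.mono_set hsubx')
    linarith
  linarith

set_option maxHeartbeats 1000000

/-- **Continuous dependence of the solution on the potential** (used in Lemma 5.7): if
`σ_m → σ` in `L₂(0,π)`, then the solutions `φ_m(·,λ)` (with quasi-derivatives `u_m(·,λ)`)
normalized by `φ_m(0,λ) = 1`, `u_m(0,λ) = 0` converge to `φ(·,λ)`, `u(·,λ)` uniformly on
`[0,π] × {|λ| ≤ R}` for every `R > 0`. -/
theorem solution_continuous_dependence_on_potential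
    (σm : ℕ → ℝ → ℂ) (σ : ℝ → ℂ)
    (hσm : ∀ m, MemLp (σm m) 2 (volume.restrict (Ioo 0 Real.pi)))
    (hσ : MemLp σ 2 (volume.restrict (Ioo 0 Real.pi)))
    (hconv : Tendsto (fun m =>
      eLpNorm (fun x => σm m x - σ x) 2 (volume.restrict (Ioo 0 Real.pi))) atTop (𝓝 0))
    (φm um : ℕ → ℂ → ℝ → ℂ) (φ u : ℂ → ℝ → ℂ)
    (hm : ∀ m (lam : ℂ), IsSLSol (σm m) lam (φm m lam) (um m lam) ∧
      φm m lam 0 = 1 ∧ um m lam 0 = 0)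
    (h : ∀ lam : ℂ, IsSLSol σ lam (φ lam) (u lam) ∧ φ lam 0 = 1 ∧ u lam 0 = 0) :
    ∀ R : ℝ, 0 < R → ∀ ε : ℝ, 0 < ε → ∃ M₀ : ℕ, ∀ m, M₀ ≤ m →
      ∀ x ∈ Icc (0 : ℝ) Real.pi, ∀ lam : ℂ, ‖lam‖ ≤ R →
        ‖φm m lam x - φ lam x‖ + ‖um m lam x - u lam x‖ ≤ ε := by
  intro R hRpos ε hε
  have hR0 : (0:ℝ) ≤ R := hRpos.le
  have hπ := Real.pi_pos
  have huIccπ : Set.uIcc (0:ℝ) Real.pi = Icc 0 Real.pi := uIcc_of_le hπ.le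
  obtain ⟨jσ, jσn, jσsq, jσcsq⟩ := sigma_facts hσ
  -- a priori bound `B` for `‖φ‖ + ‖u‖`
  set Γ₀ := ∫ t in (0:ℝ)..Real.pi, (1 + R + ‖σ t‖ + ‖σ t‖^2) with hΓ₀def
  set B := (2:ℝ) ^ (⌈2*Γ₀⌉₊ + 1) with hBdef
  have hBpos : 0 < B := by positivity
  have zero_sol : ∀ lam : ℂ, IsSLSol σ lam (fun _ => 0) (fun _ => 0) := by
    intro lam
    refine ⟨continuousOn_const, continuousOn_const, ?_⟩
    intro x hx
    constructor <;> simp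
  have igσ : IntervalIntegrable (fun t => 1 + R + ‖σ t‖ + ‖σ t‖^2) volume 0 Real.pi :=
    (intervalIntegrable_const.add jσn).add jσsq
  have hgσ0 : ∀ t : ℝ, 0 ≤ 1 + R + ‖σ t‖ + ‖σ t‖^2 := fun t => by
    nlinarith [norm_nonneg (σ t), sq_nonneg ‖σ t‖]
  have hB : ∀ lam : ℂ, ‖lam‖ ≤ R → ∀ t ∈ Icc (0:ℝ) Real.pi,
      ‖φ lam t‖ + ‖u lam t‖ ≤ B := by
    intro lam hlam
    obtain ⟨hsol, hφ0, hu0⟩ := h lam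
    have hcont : ContinuousOn (fun t => ‖φ lam t‖ + ‖u lam t‖) (Set.uIcc 0 Real.pi) := by
      rw [huIccπ]; exact hsol.1.norm.add hsol.2.1.norm
    have hkey := key_estimate hlam hsol (zero_sol lam) jσ jσn jσsq jσcsq jσ jσn jσsq jσcsq
      (q_integrable hσ hσ) (q3_integrable hσ hσ)
    have hineq : ∀ x ∈ Icc (0:ℝ) Real.pi, ‖φ lam x‖ + ‖u lam x‖ ≤
        1 + ∫ t in (0:ℝ)..x, (1 + R + ‖σ t‖ + ‖σ t‖^2) * (‖φ lam t‖ + ‖u lam t‖) := by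
      intro x hx
      have hk := hkey x hx
      simp only [sub_zero, sub_self, norm_zero, zero_mul, mul_zero, add_zero,
        intervalIntegral.integral_zero, hφ0, hu0, norm_one] at hk
      linarith
    intro t ht
    exact my_gronwall (f := fun t => ‖φ lam t‖ + ‖u lam t‖) hπ.le
      (igσ.mul_continuousOn hcont) igσ hgσ0 (fun t => by positivity) zero_le_one hineq
      hΓ₀def.ge t ht |>.trans (by rw [hBdef, one_mul])
  -- constants
  set Iσ := ∫ t in (0:ℝ)..Real.pi, ‖σ t‖^2 with hIσdef
  have hIσ0 : 0 ≤ Iσ :=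
    intervalIntegral.integral_nonneg hπ.le (fun t _ => by positivity)
  set Γ₁ := (1+R)*Real.pi + (Real.pi + (2*Iσ+2))/2 + (2*Iσ+2) with hΓ₁def
  set P := (2:ℝ) ^ (⌈2*Γ₁⌉₊ + 1) with hPdef
  have hPpos : 0 < P := by positivity
  set C₂ := 14*Real.pi + 6*Iσ + 4 with hC₂def
  have hC₂pos : 0 < C₂ := by nlinarith
  set τ := ε/(4*B*C₂*P) with hτdef
  have hτpos : 0 < τ := by positivity
  set δ := min 1 (ε*τ/(2*B*P)) with hδdef
  have hδpos : 0 < δ := lt_min one_pos (by positivity)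
  have hτne : τ ≠ 0 := hτpos.ne'
  have hBne : B ≠ 0 := hBpos.ne'
  have hPne : P ≠ 0 := hPpos.ne'
  have hC₂ne : C₂ ≠ 0 := hC₂pos.ne'
  clear_value Γ₀ B Iσ Γ₁ P C₂ τ δ
  -- choose M₀ so that the L² error is at most δ
  have hev : ∀ᶠ m in atTop, eLpNorm (fun x => σm m x - σ x) 2
      (volume.restrict (Ioo 0 Real.pi)) ≤ ENNReal.ofReal (Real.sqrt δ) :=
    ENNReal.tendsto_nhds_zero.mp hconv _ (by
      simp only [gt_iff_lt, ENNReal.ofReal_pos]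
      exact Real.sqrt_pos.mpr hδpos)
  obtain ⟨M₀, hM₀⟩ := eventually_atTop.mp hev
  refine ⟨M₀, ?_⟩
  intro m hm' x hx lam hlam
  -- the L² error
  set Dm := ∫ t in (0:ℝ)..Real.pi, ‖σm m t - σ t‖^2 with hDmdef
  have hDm0 : 0 ≤ Dm :=
    intervalIntegral.integral_nonneg hπ.le (fun t _ => by positivity)
  have hDmδ : Dm ≤ δ := by
    have h1 := hM₀ m hm'
    have hmem : MemLp (fun x => σm m x - σ x) 2 (volume.restrict (Ioo 0 Real.pi)) :=
      (hσm m).sub hσ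
    rw [hmem.eLpNorm_eq_integral_rpow_norm two_ne_zero ENNReal.ofNat_ne_top,
      ENNReal.ofReal_le_ofReal_iff (Real.sqrt_nonneg _)] at h1
    simp only [ENNReal.toReal_ofNat] at h1
    have hXeq : (∫ a, ‖σm m a - σ a‖ ^ (2:ℝ) ∂(volume.restrict (Ioo 0 Real.pi))) = Dm := by
      have : ∀ a : ℝ, ‖σm m a - σ a‖ ^ (2:ℝ) = ‖σm m a - σ a‖ ^ 2 := fun a => by
        rw [show (2:ℝ) = ((2:ℕ):ℝ) by norm_num, Real.rpow_natCast]
      rw [integral_congr_ae (Filter.Eventually.of_forall this), restrict_Ioo_pi, hDmdef,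
        intervalIntegral.integral_of_le hπ.le]
    rw [hXeq] at h1
    have h2 : (Dm ^ ((2:ℝ))⁻¹) ^ (2:ℕ) ≤ (Real.sqrt δ) ^ (2:ℕ) :=
      pow_le_pow_left₀ (Real.rpow_nonneg hDm0 _) h1 2
    rw [Real.sq_sqrt hδpos.le] at h2
    calc Dm = (Dm ^ ((2:ℝ))⁻¹) ^ (2:ℕ) := by
          rw [← Real.rpow_natCast (Dm ^ _) 2, ← Real.rpow_mul hDm0]
          norm_num
      _ ≤ δ := h2
  have hDm1 : Dm ≤ 1 := hDmδ.trans (by rw [hδdef]; exact min_le_left _ _)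
  -- per-m integrability facts
  obtain ⟨jm, jmn, jmsq, jmcsq⟩ := sigma_facts (hσm m)
  obtain ⟨jd, jdn, jdsq0, jdcsq⟩ := sigma_facts ((hσm m).sub hσ)
  have jdsq : IntervalIntegrable (fun t => ‖σm m t - σ t‖^2) volume 0 Real.pi := jdsq0
  -- bound for ∫ ‖σm‖²
  set Im := ∫ t in (0:ℝ)..Real.pi, ‖σm m t‖^2 with hImdef
  have hIm0 : 0 ≤ Im :=
    intervalIntegral.integral_nonneg hπ.le (fun t _ => by positivity)
  have hImle : Im ≤ 2*Dm + 2*Iσ := by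
    have hpt : ∀ t ∈ Icc (0:ℝ) Real.pi,
        ‖σm m t‖^2 ≤ 2*‖σm m t - σ t‖^2 + 2*‖σ t‖^2 := by
      intro t _
      have h1 : ‖σm m t‖ ≤ ‖σm m t - σ t‖ + ‖σ t‖ := by
        have := norm_sub_norm_le (σm m t) (σ t)
        linarith
      nlinarith [norm_nonneg (σm m t), norm_nonneg (σm m t - σ t), norm_nonneg (σ t),
        sq_nonneg (‖σm m t - σ t‖ - ‖σ t‖)]
    have hmono := intervalIntegral.integral_mono_on hπ.le jmsq
      ((jdsq.const_mul 2).add (jσsq.const_mul 2)) hpt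
    rw [intervalIntegral.integral_add (jdsq.const_mul 2) (jσsq.const_mul 2),
      intervalIntegral.integral_const_mul, intervalIntegral.integral_const_mul] at hmono
    rw [hImdef, hDmdef, hIσdef]
    exact hmono
  -- bound for ∫ ‖σm‖
  have hintn : (∫ t in (0:ℝ)..Real.pi, ‖σm m t‖) ≤ (Real.pi + Im)/2 := by
    have hpt : ∀ t ∈ Icc (0:ℝ) Real.pi, ‖σm m t‖ ≤ (1 + ‖σm m t‖^2)/2 := fun t _ => by
      nlinarith [sq_nonneg (‖σm m t‖ - 1)]
    have hmono := intervalIntegral.integral_mono_on hπ.le jmn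
      ((intervalIntegrable_const.add jmsq).div_const 2) hpt
    rwa [intervalIntegral.integral_div,
      intervalIntegral.integral_add intervalIntegrable_const jmsq,
      intervalIntegral.integral_const, sub_zero, smul_eq_mul, mul_one] at hmono
  -- bound for ∫ g_m
  have igm : IntervalIntegrable (fun t => 1 + R + ‖σm m t‖ + ‖σm m t‖^2) volume 0 Real.pi :=
    (intervalIntegrable_const.add jmn).add jmsq
  have hgmint : (∫ t in (0:ℝ)..Real.pi, (1 + R + ‖σm m t‖ + ‖σm m t‖^2)) ≤ Γ₁ := by
    rw [intervalIntegral.integral_add (intervalIntegrable_const.add jmn) jmsq,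
      intervalIntegral.integral_add intervalIntegrable_const jmn,
      intervalIntegral.integral_const, sub_zero, smul_eq_mul, ← hImdef, hΓ₁def]
    have hIm2 : Im ≤ 2*Iσ + 2 := by linarith
    nlinarith [hintn, hπ]
  -- pointwise AM–GM bound for the cross term coefficient
  set rhs : ℝ → ℝ := fun t => (1/(2*τ)) * ‖σm m t - σ t‖^2
    + τ * (14 + 2*‖σm m t‖^2 + 2*‖σ t‖^2) with hrhsdef
  have irhs : IntervalIntegrable rhs volume 0 Real.pi :=
    (jdsq.const_mul _).add
      (((intervalIntegrable_const.add (jmsq.const_mul 2)).add (jσsq.const_mul 2)).const_mul _)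
  have hrhsint : (∫ t in (0:ℝ)..Real.pi, rhs t)
      = (1/(2*τ))*Dm + τ*(14*Real.pi + 2*Im + 2*Iσ) := by
    rw [hrhsdef]
    rw [intervalIntegral.integral_add (jdsq.const_mul _)
        ((((intervalIntegrable_const.add (jmsq.const_mul 2)).add (jσsq.const_mul 2)).const_mul _)),
      intervalIntegral.integral_const_mul, intervalIntegral.integral_const_mul,
      intervalIntegral.integral_add (intervalIntegrable_const.add (jmsq.const_mul 2))
        (jσsq.const_mul 2),
      intervalIntegral.integral_add intervalIntegrable_const (jmsq.const_mul 2),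
      intervalIntegral.integral_const, sub_zero, smul_eq_mul,
      intervalIntegral.integral_const_mul, intervalIntegral.integral_const_mul,
      ← hDmdef, ← hImdef, ← hIσdef]
    ring
  have hptq : ∀ t : ℝ, ‖σm m t - σ t‖ * (3 + ‖σm m t‖ + ‖σ t‖) ≤ rhs t := by
    intro t
    have hs : 0 ≤ ‖σm m t - σ t‖ := norm_nonneg _
    have ha : 0 ≤ ‖σm m t‖ := norm_nonneg _
    have hb : 0 ≤ ‖σ t‖ := norm_nonneg _
    set s := ‖σm m t - σ t‖ with hsdef
    set a := ‖σm m t‖ with hadef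
    set b := ‖σ t‖ with hbdef
    have hw : (3 + a + b)^2 ≤ 28 + 4*a^2 + 4*b^2 := by
      nlinarith [sq_nonneg (a - b), sq_nonneg (2*a - 3), sq_nonneg (2*b - 3)]
    have h1' : 2*τ*(s*(3 + a + b)) ≤ s^2 + τ^2*(3 + a + b)^2 := by
      nlinarith [sq_nonneg (s - τ*(3 + a + b))]
    have h2' : τ^2*(3 + a + b)^2 ≤ τ^2*(28 + 4*a^2 + 4*b^2) :=
      mul_le_mul_of_nonneg_left hw (sq_nonneg τ)
    have h2 : 2*τ*(s*(3 + a + b)) ≤ s^2 + 2*τ^2*(14 + 2*a^2 + 2*b^2) := by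
      nlinarith [h1', h2']
    have h3 : s*(3 + a + b)
        ≤ (s^2 + 2*τ^2*(14 + 2*a^2 + 2*b^2))/(2*τ) := by
      rw [le_div_iff₀ (by positivity)]
      nlinarith [h2]
    refine h3.trans (le_of_eq ?_)
    simp only [hrhsdef]
    rw [← hsdef, ← hadef, ← hbdef]
    field_simp
  -- solutions and key estimate
  obtain ⟨hsolm, hφm0, hum0⟩ := hm m lam
  obtain ⟨hsol, hφ0, hu0⟩ := h lam
  have hcontf : ContinuousOn (fun t => ‖φm m lam t - φ lam t‖ + ‖um m lam t - u lam t‖)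
      (Set.uIcc 0 Real.pi) := by
    rw [huIccπ]
    exact ((hsolm.1.sub hsol.1).norm.add ((hsolm.2.1.sub hsol.2.1)).norm)
  have hkey := key_estimate hlam hsolm hsol jm jmn jmsq jmcsq jσ jσn jσsq jσcsq
    (q_integrable (hσm m) hσ) (q3_integrable (hσm m) hσ)
  -- bound the cross term
  set am := B * ((1/(2*τ))*Dm + τ*(14*Real.pi + 2*Im + 2*Iσ)) with hamdef
  have hcross : (∫ t in (0:ℝ)..Real.pi,
      ‖σm m t - σ t‖ * (3 + ‖σm m t‖ + ‖σ t‖) * (‖φ lam t‖ + ‖u lam t‖)) ≤ am := by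
    have hic : IntervalIntegrable (fun t =>
        ‖σm m t - σ t‖ * (3 + ‖σm m t‖ + ‖σ t‖) * (‖φ lam t‖ + ‖u lam t‖)) volume 0 Real.pi := by
      apply (q3_integrable (hσm m) hσ).mul_continuousOn
      rw [huIccπ]
      exact hsol.1.norm.add hsol.2.1.norm
    have hmono := intervalIntegral.integral_mono_on hπ.le hic (irhs.const_mul B)
      (fun t ht => ?_)
    · rw [intervalIntegral.integral_const_mul, hrhsint] at hmono
      exact hmono
    · have h1 : ‖φ lam t‖ + ‖u lam t‖ ≤ B := hB lam hlam t ht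
      have h3 : (0:ℝ) ≤ ‖σm m t - σ t‖ * (3 + ‖σm m t‖ + ‖σ t‖) := by positivity
      calc ‖σm m t - σ t‖ * (3 + ‖σm m t‖ + ‖σ t‖) * (‖φ lam t‖ + ‖u lam t‖)
          ≤ ‖σm m t - σ t‖ * (3 + ‖σm m t‖ + ‖σ t‖) * B :=
            mul_le_mul_of_nonneg_left h1 h3
        _ = B * (‖σm m t - σ t‖ * (3 + ‖σm m t‖ + ‖σ t‖)) := by ring
        _ ≤ B * rhs t := mul_le_mul_of_nonneg_left (hptq t) hBpos.le
  have ham0 : 0 ≤ am := by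
    apply mul_nonneg hBpos.le
    have h1 : 0 ≤ (1/(2*τ))*Dm := mul_nonneg (by positivity) hDm0
    have h2 : 0 ≤ τ*(14*Real.pi + 2*Im + 2*Iσ) := mul_nonneg hτpos.le (by nlinarith)
    linarith
  -- Grönwall for the difference
  have hineqm : ∀ x' ∈ Icc (0:ℝ) Real.pi,
      ‖φm m lam x' - φ lam x'‖ + ‖um m lam x' - u lam x'‖ ≤ am + ∫ t in (0:ℝ)..x',
        (1 + R + ‖σm m t‖ + ‖σm m t‖^2) * (‖φm m lam t - φ lam t‖ + ‖um m lam t - u lam t‖) := by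
    intro x' hx'
    have h1 := hkey x' hx'
    have h2 : ‖φm m lam 0 - φ lam 0‖ + ‖um m lam 0 - u lam 0‖ = 0 := by
      rw [hφm0, hφ0, hum0, hu0]; simp
    rw [h2] at h1
    linarith
  have hgm0 : ∀ t : ℝ, 0 ≤ 1 + R + ‖σm m t‖ + ‖σm m t‖^2 := fun t => by
    nlinarith [norm_nonneg (σm m t), sq_nonneg ‖σm m t‖]
  have hgron := my_gronwall
    (f := fun t => ‖φm m lam t - φ lam t‖ + ‖um m lam t - u lam t‖) hπ.le
    (igm.mul_continuousOn hcontf) igm hgm0 (fun t => by positivity) ham0 hineqm hgmint x hx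
  -- final arithmetic
  have hamP : am ≤ ε / P := by
    have hδ2 : Dm ≤ ε*τ/(2*B*P) := hDmδ.trans (by rw [hδdef]; exact min_le_right _ _)
    have hE : 14*Real.pi + 2*Im + 2*Iσ ≤ C₂ := by
      rw [hC₂def]; linarith
    have h1 : B * ((1/(2*τ))*Dm) ≤ ε/(4*P) := by
      have hstep : B * ((1/(2*τ))*Dm) ≤ B * ((1/(2*τ))*(ε*τ/(2*B*P))) := by
        gcongr
      refine hstep.trans (le_of_eq ?_)
      field_simp
      ring
    have h2 : B * (τ*(14*Real.pi + 2*Im + 2*Iσ)) ≤ ε/(4*P) := by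
      have hstep : B * (τ*(14*Real.pi + 2*Im + 2*Iσ)) ≤ B * (τ*C₂) := by
        gcongr
      refine hstep.trans (le_of_eq ?_)
      rw [hτdef]
      field_simp
    have hhalf : ε/(4*P) + ε/(4*P) ≤ ε/P := by
      have he : ε/(4*P) + ε/(4*P) = ε/(2*P) := by ring
      rw [he]
      exact div_le_div_of_nonneg_left hε.le hPpos (by linarith)
    calc am = B * ((1/(2*τ))*Dm) + B * (τ*(14*Real.pi + 2*Im + 2*Iσ)) := by
          rw [hamdef]; ring
      _ ≤ ε/(4*P) + ε/(4*P) := add_le_add h1 h2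
      _ ≤ ε/P := hhalf
  have hfin : am * (2:ℝ) ^ (⌈2*Γ₁⌉₊ + 1) ≤ ε := by
    rw [show ((2:ℝ) ^ (⌈2*Γ₁⌉₊ + 1)) = P from hPdef.symm]
    have := mul_le_mul_of_nonneg_right hamP hPpos.le
    rwa [div_mul_cancel₀ ε hPpos.ne'] at this
  exact hgron.trans hfin
end
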